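/- arXiv:2207.14441 — 2 statements merged into one kernel-verified Lean document; each statement's English description precedes it below -/
import Mathlib

section
/- Let N ≥ 3 be an integer, s ∈ (0, 1/2] with N > 4s + 1, and M > 0. Define F : ℝ^N × (0,∞) → [0,∞] by F(y,t) = ∫_{ℝ^N} t^{2s−1} (|y−x| + t)^{−(N+2s)} (1+|x|)^{−(N−2s)} dx. Then the double integral ∫_M^∞ ∫_{ℝ^N} t^{1−2s} F(y,t)² (1+|y|+t) dy dt is finite. -/
open MeasureTheory ENNReal

lemma keyA {n s M t u v w : ℝ} (hn : 3 ≤ n) (hs0 : 0 < s) (hs : s ≤ 1/2)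
    (hM : 0 < M) (ht : M ≤ t) (hu : 0 ≤ u) (hv : 0 ≤ v) (hw : 0 ≤ w) (hwuv : w ≤ u + v) :
    t ^ (2*s-1) * (u + t) ^ (-(n + 2*s)) * (1 + v) ^ (-(n - 2*s)) ≤
      ((2:ℝ) ^ (n - 2*s) * (min 1 M) ^ (-(n + s)) * t ^ (s - 1) * (1 + w + t) ^ (2*s - n)
        + (2:ℝ) ^ (n + 2*s) * t ^ (2*s - 1) * (1 + w + t) ^ (s - n)) *
      ((1 + u) ^ (-(n + s)) + (1 + v) ^ (-(n + s))) := by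
  have ht0 : 0 < t := hM.trans_le ht
  set c := min 1 M with hc
  have hc0 : 0 < c := lt_min one_pos hM
  have hcM : c ≤ M := min_le_right _ _
  have hc1 : c ≤ 1 := min_le_left _ _
  set S := 1 + w + t with hSdef
  have hS : 0 < S := by simp only [hSdef]; linarith
  have hab : S ≤ (u + t) + (1 + v) := by simp only [hSdef]; linarith
  have ha : 0 < u + t := by linarith
  have hb : 0 < 1 + v := by linarith
  set c1 := (2:ℝ) ^ (n - 2*s) * c ^ (-(n + s)) * t ^ (s - 1) * S ^ (2*s - n) with hc1def
  set c2 := (2:ℝ) ^ (n + 2*s) * t ^ (2*s - 1) * S ^ (s - n) with hc2def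
  set k1 := (1 + u) ^ (-(n + s)) with hk1def
  set k2 := (1 + v) ^ (-(n + s)) with hk2def
  have hc1' : 0 ≤ c1 := by
    have := Real.rpow_nonneg (le_of_lt hc0) (-(n+s))
    have := Real.rpow_nonneg ht0.le (s-1)
    have := Real.rpow_nonneg hS.le (2*s-n)
    have := Real.rpow_nonneg (by norm_num : (0:ℝ) ≤ 2) (n-2*s)
    positivity
  have hc2' : 0 ≤ c2 := by
    have := Real.rpow_nonneg ht0.le (2*s-1)
    have := Real.rpow_nonneg hS.le (s-n)
    have := Real.rpow_nonneg (by norm_num : (0:ℝ) ≤ 2) (n+2*s)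
    positivity
  have hk1' : 0 ≤ k1 := Real.rpow_nonneg (by linarith) _
  have hk2' : 0 ≤ k2 := Real.rpow_nonneg (by linarith) _
  have hexpand : (c1 + c2) * (k1 + k2) = c1*k1 + (c1*k2 + c2*k1 + c2*k2) := by ring
  have half_eq : ∀ e : ℝ, (S/2) ^ e = S ^ e / 2 ^ e :=
    fun e => Real.div_rpow hS.le (by norm_num) e
  rcases le_or_gt (S/2) (1+v) with hcase | hcase
  · -- LHS ≤ c1 * k1
    have h1 : (1+v) ^ (-(n-2*s)) ≤ (2:ℝ)^(n-2*s) * S^(2*s-n) := by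
      have h := Real.rpow_le_rpow_of_nonpos (by positivity : (0:ℝ) < S/2) hcase
        (by linarith : -(n-2*s) ≤ 0)
      calc (1+v)^(-(n-2*s)) ≤ (S/2)^(-(n-2*s)) := h
        _ = 2^(n-2*s) * S^(2*s-n) := by
            rw [half_eq, Real.rpow_neg hS.le, Real.rpow_neg (by norm_num : (0:ℝ) ≤ 2)]
            rw [show (2*s-n) = -(n-2*s) by ring, Real.rpow_neg hS.le]
            field_simp
    have hA : (u+t)^(-(n + 2*s)) ≤ t^(-s) * (c^(-(n+s)) * (1+u)^(-(n+s))) := by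
      have e : (u+t)^(-(n+2*s)) = (u+t)^(-s) * (u+t)^(-(n+s)) := by
        rw [← Real.rpow_add ha]; congr 1; ring
      rw [e]
      have h1' : (u+t)^(-s) ≤ t^(-s) :=
        Real.rpow_le_rpow_of_nonpos ht0 (by linarith) (by linarith)
      have h2 : (u+t)^(-(n+s)) ≤ c^(-(n+s)) * (1+u)^(-(n+s)) := by
        have hcu : c * (1+u) ≤ u + t := by
          have := mul_le_of_le_one_left hu hc1
          nlinarith
        have h3 := Real.rpow_le_rpow_of_nonpos (by positivity : (0:ℝ) < c*(1+u)) hcu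
          (by linarith : -(n+s) ≤ 0)
        rwa [Real.mul_rpow hc0.le (by linarith)] at h3
      exact mul_le_mul h1' h2 (Real.rpow_nonneg ha.le _) (Real.rpow_nonneg ht0.le _)
    have key : t ^ (2*s-1) * (u + t) ^ (-(n + 2*s)) * (1 + v) ^ (-(n - 2*s)) ≤ c1 * k1 := by
      calc t ^ (2*s-1) * (u + t) ^ (-(n + 2*s)) * (1 + v) ^ (-(n - 2*s))
          ≤ t ^ (2*s-1) * (t^(-s) * (c^(-(n+s)) * (1+u)^(-(n+s)))) * ((2:ℝ)^(n-2*s) * S^(2*s-n)) := by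
            apply mul_le_mul (mul_le_mul le_rfl hA (Real.rpow_nonneg ha.le _)
              (Real.rpow_nonneg ht0.le _)) h1 (Real.rpow_nonneg hb.le _) ?_
            have := Real.rpow_nonneg ht0.le (2*s-1)
            have := Real.rpow_nonneg ht0.le (-s)
            have := Real.rpow_nonneg hc0.le (-(n+s))
            have := Real.rpow_nonneg (by linarith : (0:ℝ) ≤ 1+u) (-(n+s))
            positivity
        _ = c1 * k1 := by
            rw [hc1def, hk1def]
            rw [show t^(s-1) = t^(2*s-1) * t^(-s) by
              rw [← Real.rpow_add ht0]; congr 1; ring]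
            ring
    have h4 : 0 ≤ c1*k2 + c2*k1 + c2*k2 := by positivity
    calc t ^ (2*s-1) * (u + t) ^ (-(n + 2*s)) * (1 + v) ^ (-(n - 2*s)) ≤ c1 * k1 := key
      _ ≤ (c1 + c2) * (k1 + k2) := by rw [hexpand]; linarith
  · -- LHS ≤ c2 * k2
    have haS : S/2 ≤ u + t := by linarith
    have hA : (u+t)^(-(n+2*s)) ≤ (2:ℝ)^(n+2*s) * S^(-(n+2*s)) := by
      have h := Real.rpow_le_rpow_of_nonpos (by positivity : (0:ℝ) < S/2) haS
        (by linarith : -(n+2*s) ≤ 0)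
      calc (u+t)^(-(n+2*s)) ≤ (S/2)^(-(n+2*s)) := h
        _ = 2^(n+2*s) * S^(-(n+2*s)) := by
            rw [half_eq, Real.rpow_neg hS.le, Real.rpow_neg (by norm_num : (0:ℝ) ≤ 2)]
            field_simp
    have hB : (1+v)^(-(n-2*s)) ≤ S^(3*s) * (1+v)^(-(n+s)) := by
      have e : (1+v)^(-(n-2*s)) = (1+v)^(3*s) * (1+v)^(-(n+s)) := by
        rw [← Real.rpow_add hb]; congr 1; ring
      rw [e]
      have h1' : (1+v)^(3*s) ≤ S^(3*s) :=
        Real.rpow_le_rpow (by linarith) (by linarith) (by linarith)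
      exact mul_le_mul_of_nonneg_right h1' (Real.rpow_nonneg (by linarith) _)
    have key : t ^ (2*s-1) * (u + t) ^ (-(n + 2*s)) * (1 + v) ^ (-(n - 2*s)) ≤ c2 * k2 := by
      calc t ^ (2*s-1) * (u + t) ^ (-(n + 2*s)) * (1 + v) ^ (-(n - 2*s))
          ≤ t ^ (2*s-1) * ((2:ℝ)^(n+2*s) * S^(-(n+2*s))) * (S^(3*s) * (1+v)^(-(n+s))) := by
            apply mul_le_mul (mul_le_mul le_rfl hA (Real.rpow_nonneg ha.le _)
              (Real.rpow_nonneg ht0.le _)) hB (Real.rpow_nonneg hb.le _) ?_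
            have := Real.rpow_nonneg ht0.le (2*s-1)
            have := Real.rpow_nonneg hS.le (-(n+2*s))
            have := Real.rpow_nonneg (by norm_num : (0:ℝ) ≤ 2) (n+2*s)
            positivity
        _ = c2 * k2 := by
            rw [hc2def, hk2def]
            rw [show S^(s-n) = S^(-(n+2*s)) * S^(3*s) by
              rw [← Real.rpow_add hS]; congr 1; ring]
            ring
    have h4 : 0 ≤ c1*k1 + c1*k2 + c2*k1 := by positivity
    calc t ^ (2*s-1) * (u + t) ^ (-(n + 2*s)) * (1 + v) ^ (-(n - 2*s)) ≤ c2 * k2 := key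
      _ ≤ (c1 + c2) * (k1 + k2) := by
          have hexpand2 : (c1 + c2) * (k1 + k2) = c2*k2 + (c1*k1 + c1*k2 + c2*k1) := by ring
          rw [hexpand2]; linarith


lemma keyC {n s M t w A B : ℝ} (hn : 3 ≤ n) (hs0 : 0 < s) (hs : s ≤ 1/2) (hns : 4*s+1 < n)
    (hM : 0 < M) (ht : M ≤ t) (hw : 0 ≤ w) (hA : 0 ≤ A) (hB : 0 ≤ B) :
    t^(1-2*s) * (A * t^(s-1) * (1+w+t)^(2*s-n) + B * t^(2*s-1) * (1+w+t)^(s-n))^2 * (1+w+t)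
      ≤ (2*A^2 * t^(-1-(n-4*s-1)/2) + 2*B^2 * t^(2*s-1-(n-1)/2)) * (1+w)^(-((3*n-4*s-1)/2)) := by
  have ht0 : 0 < t := hM.trans_le ht
  set S := 1 + w + t with hSdef
  have hS : 0 < S := by simp only [hSdef]; linarith
  have htS : t ≤ S := by simp only [hSdef]; linarith
  have hw1 : (0:ℝ) < 1 + w := by linarith
  have hwS : 1 + w ≤ S := by simp only [hSdef]; linarith
  set γ₁ := (n-4*s-1)/2 with hγ₁
  set γ₂ := (n-1)/2 with hγ₂
  set β := (3*n-4*s-1)/2 with hβ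
  set x1 := A * t^(s-1) * S^(2*s-n) with hx1
  set x2 := B * t^(2*s-1) * S^(s-n) with hx2
  have hx1' : 0 ≤ x1 := by
    have := Real.rpow_nonneg ht0.le (s-1); have := Real.rpow_nonneg hS.le (2*s-n); positivity
  have hx2' : 0 ≤ x2 := by
    have := Real.rpow_nonneg ht0.le (2*s-1); have := Real.rpow_nonneg hS.le (s-n); positivity
  have hsq : (x1+x2)^2 ≤ 2*x1^2 + 2*x2^2 := by nlinarith [sq_nonneg (x1-x2)]
  have eq1 : t^(1-2*s) * x1^2 * S = A^2 * t^(-1:ℝ) * S^(4*s-2*n+1) := by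
    rw [hx1, mul_pow, mul_pow]
    rw [show (t^(s-1))^2 = t^(2*s-2) by rw [sq, ← Real.rpow_add ht0]; congr 1; ring]
    rw [show (S^(2*s-n))^2 = S^(4*s-2*n) by rw [sq, ← Real.rpow_add hS]; congr 1; ring]
    rw [show t^(1-2*s) * (A^2 * t^(2*s-2) * S^(4*s-2*n)) * S
        = A^2 * (t^(1-2*s) * t^(2*s-2)) * (S^(4*s-2*n) * S^(1:ℝ)) by rw [Real.rpow_one]; ring]
    rw [← Real.rpow_add ht0, ← Real.rpow_add hS]
    rw [show (1-2*s+(2*s-2):ℝ) = -1 by ring, show (4*s-2*n+(1:ℝ)) = 4*s-2*n+1 by ring]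
  have eq2 : t^(1-2*s) * x2^2 * S = B^2 * t^(2*s-1) * S^(2*s-2*n+1) := by
    rw [hx2, mul_pow, mul_pow]
    rw [show (t^(2*s-1))^2 = t^(4*s-2) by rw [sq, ← Real.rpow_add ht0]; congr 1; ring]
    rw [show (S^(s-n))^2 = S^(2*s-2*n) by rw [sq, ← Real.rpow_add hS]; congr 1; ring]
    rw [show t^(1-2*s) * (B^2 * t^(4*s-2) * S^(2*s-2*n)) * S
        = B^2 * (t^(1-2*s) * t^(4*s-2)) * (S^(2*s-2*n) * S^(1:ℝ)) by rw [Real.rpow_one]; ring]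
    rw [← Real.rpow_add ht0, ← Real.rpow_add hS]
    rw [show (1-2*s+(4*s-2):ℝ) = 2*s-1 by ring, show (2*s-2*n+(1:ℝ)) = 2*s-2*n+1 by ring]
  have le1 : S^(4*s-2*n+1) ≤ t^(-γ₁) * (1+w)^(-β) := by
    rw [show (4*s-2*n+1) = (-γ₁) + (-β) by rw [hγ₁, hβ]; ring, Real.rpow_add hS]
    exact mul_le_mul (Real.rpow_le_rpow_of_nonpos ht0 htS (by rw [hγ₁]; linarith))
      (Real.rpow_le_rpow_of_nonpos hw1 hwS (by rw [hβ]; linarith))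
      (Real.rpow_nonneg hS.le _) (Real.rpow_nonneg ht0.le _)
  have le2 : S^(2*s-2*n+1) ≤ t^(-γ₂) * (1+w)^(-β) := by
    rw [show (2*s-2*n+1) = (-γ₂) + (-β) by rw [hγ₂, hβ]; ring, Real.rpow_add hS]
    exact mul_le_mul (Real.rpow_le_rpow_of_nonpos ht0 htS (by rw [hγ₂]; linarith))
      (Real.rpow_le_rpow_of_nonpos hw1 hwS (by rw [hβ]; linarith))
      (Real.rpow_nonneg hS.le _) (Real.rpow_nonneg ht0.le _)
  have bound1 : t^(1-2*s) * x1^2 * S ≤ A^2 * t^(-1-γ₁) * (1+w)^(-β) := by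
    rw [eq1, show (-1-γ₁ : ℝ) = (-1) + (-γ₁) by ring, Real.rpow_add ht0]
    calc A^2 * t^(-1:ℝ) * S^(4*s-2*n+1) ≤ A^2 * t^(-1:ℝ) * (t^(-γ₁) * (1+w)^(-β)) := by
          apply mul_le_mul_of_nonneg_left le1
          have := Real.rpow_nonneg ht0.le (-1:ℝ); positivity
      _ = A^2 * (t^(-1:ℝ) * t^(-γ₁)) * (1+w)^(-β) := by ring
  have bound2 : t^(1-2*s) * x2^2 * S ≤ B^2 * t^(2*s-1-γ₂) * (1+w)^(-β) := by
    rw [eq2, show (2*s-1-γ₂ : ℝ) = (2*s-1) + (-γ₂) by ring, Real.rpow_add ht0]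
    calc B^2 * t^(2*s-1) * S^(2*s-2*n+1) ≤ B^2 * t^(2*s-1) * (t^(-γ₂) * (1+w)^(-β)) := by
          apply mul_le_mul_of_nonneg_left le2
          have := Real.rpow_nonneg ht0.le (2*s-1); positivity
      _ = B^2 * (t^(2*s-1) * t^(-γ₂)) * (1+w)^(-β) := by ring
  have step : t^(1-2*s) * (x1+x2)^2 * S ≤ t^(1-2*s) * (2*x1^2 + 2*x2^2) * S := by
    have h1 : 0 ≤ t^(1-2*s) := Real.rpow_nonneg ht0.le _
    have h2 : 0 ≤ S := hS.le
    calc t^(1-2*s) * (x1+x2)^2 * S = (t^(1-2*s) * S) * (x1+x2)^2 := by ring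
      _ ≤ (t^(1-2*s) * S) * (2*x1^2 + 2*x2^2) := by
          apply mul_le_mul_of_nonneg_left hsq; positivity
      _ = t^(1-2*s) * (2*x1^2 + 2*x2^2) * S := by ring
  calc t^(1-2*s) * (x1+x2)^2 * S ≤ t^(1-2*s) * (2*x1^2 + 2*x2^2) * S := step
    _ = 2*(t^(1-2*s) * x1^2 * S) + 2*(t^(1-2*s) * x2^2 * S) := by ring
    _ ≤ 2*(A^2 * t^(-1-γ₁) * (1+w)^(-β)) + 2*(B^2 * t^(2*s-1-γ₂) * (1+w)^(-β)) := by
        linarith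
    _ = (2*A^2 * t^(-1-γ₁) + 2*B^2 * t^(2*s-1-γ₂)) * (1+w)^(-β) := by ring

/-- For `N ≥ 3`, `s ∈ (0,1/2]` with `N > 4s+1`, and `M > 0`, with
`F(y,t) = ∫_{ℝ^N} t^{2s−1}(|y−x|+t)^{−(N+2s)}(1+|x|)^{−(N−2s)} dx ∈ [0,∞]`, the
double integral `∫_M^∞ ∫_{ℝ^N} t^{1−2s} F(y,t)² (1+|y|+t) dy dt` is finite. -/
theorem stmt_14 (N : ℕ) (hN : 3 ≤ N) (s : ℝ) (hs0 : 0 < s) (hs : s ≤ 1 / 2)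
    (hNs : 4 * s + 1 < N) (M : ℝ) (hM : 0 < M) :
    (∫⁻ t in Set.Ioi M, ∫⁻ y : EuclideanSpace ℝ (Fin N),
        ENNReal.ofReal (t ^ (1 - 2 * s)) *
          (∫⁻ x : EuclideanSpace ℝ (Fin N),
            ENNReal.ofReal (t ^ (2 * s - 1) * (‖y - x‖ + t) ^ (-((N : ℝ) + 2 * s)) *
              (1 + ‖x‖) ^ (-((N : ℝ) - 2 * s)))) ^ 2 *
          ENNReal.ofReal (1 + ‖y‖ + t)) < ⊤ := by
  have hN3 : (3:ℝ) ≤ (N:ℝ) := by exact_mod_cast hN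
  set n : ℝ := (N:ℝ) with hn
  have hc0 : (0:ℝ) < min 1 M := lt_min one_pos hM
  set A : ℝ := (2:ℝ) ^ (n - 2*s) * (min 1 M) ^ (-(n + s)) with hA
  set B : ℝ := (2:ℝ) ^ (n + 2*s) with hB
  have hA0 : 0 ≤ A := by
    have := Real.rpow_nonneg (by norm_num : (0:ℝ) ≤ 2) (n-2*s)
    have := Real.rpow_nonneg hc0.le (-(n+s))
    positivity
  have hB0 : 0 ≤ B := Real.rpow_nonneg (by norm_num) _
  set β : ℝ := (3*n - 4*s - 1)/2 with hβ
  set γ₁ : ℝ := (n - 4*s - 1)/2 with hγ₁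
  set γ₂ : ℝ := (n - 1)/2 with hγ₂
  set K : ℝ≥0∞ := ∫⁻ x : EuclideanSpace ℝ (Fin N), ENNReal.ofReal ((1 + ‖x‖) ^ (-(n + s)))
    with hK
  have hKfin : K < ⊤ := by
    apply finite_integral_one_add_norm
    rw [finrank_euclideanSpace_fin]
    linarith
  set L : ℝ≥0∞ := ∫⁻ y : EuclideanSpace ℝ (Fin N), ENNReal.ofReal ((1 + ‖y‖) ^ (-β))
    with hL
  have hLfin : L < ⊤ := by
    apply finite_integral_one_add_norm
    rw [finrank_euclideanSpace_fin, hβ]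
    linarith
  set C : ℝ≥0∞ := 4 * K^2 * L with hC
  have hCfin : C ≠ ⊤ := by
    rw [hC]
    exact (ENNReal.mul_lt_top (ENNReal.mul_lt_top (by norm_num)
      (ENNReal.pow_lt_top hKfin)) hLfin).ne
  set g : ℝ → ℝ := fun t => 2*A^2 * t^(-1-γ₁) + 2*B^2 * t^(2*s-1-γ₂) with hg
  have main : (∫⁻ t in Set.Ioi M, ∫⁻ y : EuclideanSpace ℝ (Fin N),
        ENNReal.ofReal (t ^ (1 - 2 * s)) *
          (∫⁻ x : EuclideanSpace ℝ (Fin N),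
            ENNReal.ofReal (t ^ (2 * s - 1) * (‖y - x‖ + t) ^ (-((N : ℝ) + 2 * s)) *
              (1 + ‖x‖) ^ (-((N : ℝ) - 2 * s)))) ^ 2 *
          ENNReal.ofReal (1 + ‖y‖ + t))
      ≤ (∫⁻ t in Set.Ioi M, ENNReal.ofReal (g t)) * C := by
    rw [← lintegral_mul_const' C _ hCfin]
    apply setLIntegral_mono' measurableSet_Ioi
    intro t htM
    rw [Set.mem_Ioi] at htM
    have ht0 : 0 < t := hM.trans htM
    -- the pointwise (in t) bound on the y-integral
    set W : EuclideanSpace ℝ (Fin N) → ℝ := fun y =>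
      A * t^(s-1) * (1+‖y‖+t)^(2*s-n) + B * t^(2*s-1) * (1+‖y‖+t)^(s-n) with hW
    have hSpos : ∀ y : EuclideanSpace ℝ (Fin N), (0:ℝ) < 1 + ‖y‖ + t := fun y => by
      have := norm_nonneg y; linarith
    have hW0 : ∀ y, 0 ≤ W y := by
      intro y
      have := Real.rpow_nonneg ht0.le (s-1)
      have := Real.rpow_nonneg ht0.le (2*s-1)
      have := Real.rpow_nonneg (hSpos y).le (2*s-n)
      have := Real.rpow_nonneg (hSpos y).le (s-n)
      positivity
    have hIy : ∀ y : EuclideanSpace ℝ (Fin N),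
        (∫⁻ x : EuclideanSpace ℝ (Fin N),
            ENNReal.ofReal (t ^ (2 * s - 1) * (‖y - x‖ + t) ^ (-((N : ℝ) + 2 * s)) *
              (1 + ‖x‖) ^ (-((N : ℝ) - 2 * s))))
          ≤ ENNReal.ofReal (W y) * (2 * K) := by
      intro y
      have step1 : (∫⁻ x : EuclideanSpace ℝ (Fin N),
          ENNReal.ofReal (t ^ (2 * s - 1) * (‖y - x‖ + t) ^ (-((N : ℝ) + 2 * s)) *
              (1 + ‖x‖) ^ (-((N : ℝ) - 2 * s))))
          ≤ ∫⁻ x : EuclideanSpace ℝ (Fin N),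
              ENNReal.ofReal (W y * ((1 + ‖y - x‖) ^ (-(n + s)) + (1 + ‖x‖) ^ (-(n + s)))) := by
        apply lintegral_mono
        intro x
        apply ENNReal.ofReal_le_ofReal
        have htri : ‖y‖ ≤ ‖y - x‖ + ‖x‖ := by
          calc ‖y‖ = ‖(y - x) + x‖ := by rw [sub_add_cancel]
            _ ≤ ‖y - x‖ + ‖x‖ := norm_add_le _ _
        exact keyA hN3 hs0 hs hM htM.le (norm_nonneg _) (norm_nonneg _) (norm_nonneg _) htri
      have step2 : (∫⁻ x : EuclideanSpace ℝ (Fin N),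
          ENNReal.ofReal (W y * ((1 + ‖y - x‖) ^ (-(n + s)) + (1 + ‖x‖) ^ (-(n + s)))))
          = ENNReal.ofReal (W y) * (2 * K) := by
        have hmeas : Measurable fun x : EuclideanSpace ℝ (Fin N) =>
            ENNReal.ofReal ((1 + ‖y - x‖) ^ (-(n + s))) := by fun_prop
        calc (∫⁻ x : EuclideanSpace ℝ (Fin N),
            ENNReal.ofReal (W y * ((1 + ‖y - x‖) ^ (-(n + s)) + (1 + ‖x‖) ^ (-(n + s)))))
            = ∫⁻ x : EuclideanSpace ℝ (Fin N), ENNReal.ofReal (W y) *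
              (ENNReal.ofReal ((1 + ‖y - x‖) ^ (-(n + s)))
                + ENNReal.ofReal ((1 + ‖x‖) ^ (-(n + s)))) := by
              congr 1; funext x
              rw [ENNReal.ofReal_mul (hW0 y),
                ENNReal.ofReal_add (Real.rpow_nonneg (by positivity) _)
                  (Real.rpow_nonneg (by positivity) _)]
          _ = ENNReal.ofReal (W y) * ∫⁻ x : EuclideanSpace ℝ (Fin N),
              (ENNReal.ofReal ((1 + ‖y - x‖) ^ (-(n + s)))
                + ENNReal.ofReal ((1 + ‖x‖) ^ (-(n + s)))) :=
              lintegral_const_mul' _ _ ENNReal.ofReal_ne_top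
          _ = ENNReal.ofReal (W y) * (K + K) := by
              congr 1
              rw [lintegral_add_left hmeas]
              congr 1
              have : ∀ x : EuclideanSpace ℝ (Fin N), ‖y - x‖ = ‖x - y‖ := fun x => norm_sub_rev _ _
              simp_rw [this]
              exact lintegral_sub_right_eq_self
                (fun x : EuclideanSpace ℝ (Fin N) => ENNReal.ofReal ((1 + ‖x‖) ^ (-(n + s)))) y
          _ = ENNReal.ofReal (W y) * (2 * K) := by rw [two_mul]
      exact step1.trans step2.le
    calc (∫⁻ y : EuclideanSpace ℝ (Fin N),
        ENNReal.ofReal (t ^ (1 - 2 * s)) *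
          (∫⁻ x : EuclideanSpace ℝ (Fin N),
            ENNReal.ofReal (t ^ (2 * s - 1) * (‖y - x‖ + t) ^ (-((N : ℝ) + 2 * s)) *
              (1 + ‖x‖) ^ (-((N : ℝ) - 2 * s)))) ^ 2 *
          ENNReal.ofReal (1 + ‖y‖ + t))
        ≤ ∫⁻ y : EuclideanSpace ℝ (Fin N),
            ENNReal.ofReal (g t * (1 + ‖y‖) ^ (-β)) * (4 * K^2) := by
          apply lintegral_mono
          intro y
          calc ENNReal.ofReal (t ^ (1 - 2 * s)) *
              (∫⁻ x : EuclideanSpace ℝ (Fin N),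
                ENNReal.ofReal (t ^ (2 * s - 1) * (‖y - x‖ + t) ^ (-((N : ℝ) + 2 * s)) *
                  (1 + ‖x‖) ^ (-((N : ℝ) - 2 * s)))) ^ 2 *
              ENNReal.ofReal (1 + ‖y‖ + t)
              ≤ ENNReal.ofReal (t ^ (1 - 2 * s)) *
                (ENNReal.ofReal (W y) * (2 * K)) ^ 2 * ENNReal.ofReal (1 + ‖y‖ + t) := by
                gcongr
                exact hIy y
            _ = ENNReal.ofReal (t ^ (1 - 2 * s) * (W y)^2 * (1 + ‖y‖ + t)) * (4 * K^2) := by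
                rw [mul_pow, ← ENNReal.ofReal_pow (hW0 y)]
                rw [ENNReal.ofReal_mul (by positivity : (0:ℝ) ≤ t ^ (1-2*s) * (W y)^2),
                  ENNReal.ofReal_mul (Real.rpow_nonneg ht0.le _)]
                have h4 : (2 * K)^2 = 4 * K^2 := by ring
                rw [h4]; ring
            _ ≤ ENNReal.ofReal (g t * (1 + ‖y‖) ^ (-β)) * (4 * K^2) := by
                apply mul_le_mul_left
                apply ENNReal.ofReal_le_ofReal
                have := keyC (A := A) (B := B) hN3 hs0 hs (by rw [hn]; exact hNs) hM htM.le
                  (norm_nonneg y) hA0 hB0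
                rw [hg, hβ, hγ₁, hγ₂]
                exact this
      _ = ENNReal.ofReal (g t) * L * (4 * K^2) := by
          rw [lintegral_mul_const' _ _
            (ENNReal.mul_lt_top (by norm_num) (ENNReal.pow_lt_top hKfin)).ne]
          congr 1
          calc (∫⁻ y : EuclideanSpace ℝ (Fin N), ENNReal.ofReal (g t * (1 + ‖y‖) ^ (-β)))
              = ∫⁻ y : EuclideanSpace ℝ (Fin N),
                  ENNReal.ofReal (g t) * ENNReal.ofReal ((1 + ‖y‖) ^ (-β)) := by
                congr 1; funext y
                rw [ENNReal.ofReal_mul']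
                exact Real.rpow_nonneg (by positivity) _
            _ = ENNReal.ofReal (g t) * L := lintegral_const_mul' _ _ ENNReal.ofReal_ne_top
      _ = ENNReal.ofReal (g t) * C := by rw [hC]; ring
  refine main.trans_lt (ENNReal.mul_lt_top ?_ hCfin.lt_top)
  have hint : IntegrableOn g (Set.Ioi M) := by
    apply Integrable.add
    · exact (integrableOn_Ioi_rpow_of_lt (by rw [hγ₁]; linarith) hM).const_mul _
    · exact (integrableOn_Ioi_rpow_of_lt (by rw [hγ₂]; linarith) hM).const_mul _
  exact hint.setLIntegral_lt_top
end

section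
/- Let N ≥ 3 and s ∈ (0,1), and let 2*_s = 2N/(N−2s). Then there exist constants B₀ > 0 and σ > 0, depending only on N and s, and for every pair 0 < Λ₁ ≤ Λ₂ a constant C > 0, such that for all Λ ∈ [Λ₁, Λ₂] and all a, b ∈ ℝ^N with |a−b| ≥ 1, one has | ∫_{ℝ^N} U_{a,Λ}(y)^{2*_s−1} U_{b,Λ}(y) dy − B₀ / (Λ^{N−2s} |a−b|^{N−2s}) | ≤ C |a−b|^{−(N−2s+σ)}. -/
open MeasureTheory

/-- The Aubin–Talenti bubble
`U_{x,Λ}(y) = (4^s γ)^{(N−2s)/4} (Λ/(1+Λ²|y−x|²))^{(N−2s)/2}`,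
where `γ = Γ((N+2s)/2)/Γ((N−2s)/2)`. -/
noncomputable def bubble (N : ℕ) (s : ℝ) (x : EuclideanSpace ℝ (Fin N)) (Λ : ℝ)
    (y : EuclideanSpace ℝ (Fin N)) : ℝ :=
  ((4 : ℝ) ^ s * (Real.Gamma (((N : ℝ) + 2 * s) / 2) / Real.Gamma (((N : ℝ) - 2 * s) / 2)))
      ^ (((N : ℝ) - 2 * s) / 4) *
    (Λ / (1 + Λ ^ 2 * ‖y - x‖ ^ 2)) ^ (((N : ℝ) - 2 * s) / 2)

/-- The normalizing constant `β(N,s)`, determined by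
`∫_{ℝ^N} β(N,s) (|x|²+1)^{−(N+2s)/2} dx = 1`. -/
noncomputable def poissonConst (N : ℕ) (s : ℝ) : ℝ :=
  (∫ x : EuclideanSpace ℝ (Fin N), (‖x‖ ^ 2 + 1) ^ (-((N : ℝ) + 2 * s) / 2))⁻¹

/-- The `s`-Poisson extension
`ũ(y,t) = β(N,s) ∫_{ℝ^N} t^{2s} (|y−ξ|²+t²)^{−(N+2s)/2} u(ξ) dξ`. -/
noncomputable def poissonExt (N : ℕ) (s : ℝ) (u : EuclideanSpace ℝ (Fin N) → ℝ)
    (y : EuclideanSpace ℝ (Fin N)) (t : ℝ) : ℝ :=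
  poissonConst N s *
    ∫ ξ : EuclideanSpace ℝ (Fin N),
      t ^ (2 * s) * (‖y - ξ‖ ^ 2 + t ^ 2) ^ (-((N : ℝ) + 2 * s) / 2) * u ξ

section Stmt15Aux
open Real

lemma aux_min_le_rpow {w p : ℝ} (hw : 0 ≤ w) (hp : 0 < p) (hp1 : p ≤ 1) :
    min 1 w ≤ w ^ p := by
  rcases le_or_gt 1 w with h | h
  · exact (min_le_left _ _).trans (Real.one_le_rpow h hp.le)
  · rw [min_eq_right h.le]
    rcases eq_or_lt_of_le hw with h0 | h0
    · rw [← h0, Real.zero_rpow hp.ne']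
    · calc w = w ^ (1:ℝ) := (Real.rpow_one w).symm
        _ ≤ w ^ p := Real.rpow_le_rpow_of_exponent_ge h0 h.le hp1

lemma aux_subadd {a b p : ℝ} (ha : 0 ≤ a) (hb : 0 ≤ b) (hp : 0 ≤ p) (hp1 : p ≤ 1) :
    (a + b) ^ p ≤ a ^ p + b ^ p := by
  have := NNReal.rpow_add_le_add_rpow a.toNNReal b.toNNReal hp hp1
  calc (a + b) ^ p = ((a.toNNReal + b.toNNReal : NNReal) : ℝ) ^ p := by
        rw [← Real.toNNReal_add ha hb, Real.coe_toNNReal _ (by linarith)]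
    _ = (((a.toNNReal + b.toNNReal) ^ p : NNReal) : ℝ) := by
        rw [← NNReal.coe_rpow]
    _ ≤ ((a.toNNReal ^ p + b.toNNReal ^ p : NNReal) : ℝ) := by exact_mod_cast this
    _ = a ^ p + b ^ p := by
        rw [NNReal.coe_add, NNReal.coe_rpow, NNReal.coe_rpow,
          Real.coe_toNNReal _ ha, Real.coe_toNNReal _ hb]

lemma aux_rpow_sub {q x y : ℝ} (hq : 0 < q) (hx : 1 ≤ x) (hy : 1 ≤ y) :
    |x ^ (-q) - y ^ (-q)| ≤ max 1 q * min 1 |x - y| := by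
  wlog hxy : x ≤ y with H
  · rw [abs_sub_comm, abs_sub_comm x y]
    exact H hq hy hx (le_of_not_ge hxy)
  have hx0 : (0:ℝ) < x := lt_of_lt_of_le one_pos hx
  have hy0 : (0:ℝ) < y := lt_of_lt_of_le one_pos hy
  have hmono : y ^ (-q) ≤ x ^ (-q) :=
    Real.rpow_le_rpow_of_nonpos hx0 hxy (by linarith)
  have h0uI : (0:ℝ) ∉ Set.uIcc x y := by
    rw [Set.uIcc_of_le hxy]
    rintro ⟨h1, -⟩; linarith
  have hval : x ^ (-q) - y ^ (-q) = q * ∫ t in x..y, t ^ (-q - 1) := by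
    rw [integral_rpow (Or.inr ⟨by intro h; apply hq.ne'; linarith, h0uI⟩)]
    have h3 : -q - 1 + 1 = -q := by ring
    rw [h3]
    rw [mul_div_assoc', mul_comm]
    rw [mul_div_assoc, div_neg, div_self hq.ne', mul_neg, mul_one, neg_sub]
  have hbound : (∫ t in x..y, t ^ (-q - 1)) ≤ y - x := by
    have h1 : ∫ t in x..y, (1:ℝ) = y - x := by simp
    rw [← h1]
    apply intervalIntegral.integral_mono_on hxy
      (intervalIntegral.intervalIntegrable_rpow (Or.inr h0uI)) intervalIntegrable_const
    intro t ht
    exact Real.rpow_le_one_of_one_le_of_nonpos (le_trans hx ht.1) (by linarith)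
  have hnn : 0 ≤ x ^ (-q) - y ^ (-q) := sub_nonneg.2 hmono
  rw [abs_of_nonneg hnn, abs_of_nonpos (by linarith), neg_sub]
  have hle1 : x ^ (-q) - y ^ (-q) ≤ 1 := by
    have := Real.rpow_le_one_of_one_le_of_nonpos hx (by linarith : -q ≤ 0)
    have h2 : 0 ≤ y ^ (-q) := Real.rpow_nonneg hy0.le _
    linarith
  have hleq : x ^ (-q) - y ^ (-q) ≤ q * (y - x) := by
    rw [hval]
    exact mul_le_mul_of_nonneg_left hbound hq.le
  rcases le_total 1 (y - x) with h | h
  · rw [min_eq_left h]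
    calc x ^ (-q) - y ^ (-q) ≤ 1 := hle1
      _ = 1 * 1 := (mul_one 1).symm
      _ ≤ max 1 q * 1 := by
        apply mul_le_mul_of_nonneg_right (le_max_left _ _) one_pos.le
    
  · rw [min_eq_right h]
    calc x ^ (-q) - y ^ (-q) ≤ q * (y - x) := hleq
      _ ≤ max 1 q * (y - x) := by
        apply mul_le_mul_of_nonneg_right (le_max_right _ _) (by linarith)

lemma aux_base_antitone {c X e : ℝ} (hc : 0 < c) (hX : c ≤ X) (he : 0 ≤ e) :
    X ^ (-e) ≤ c ^ (-e) :=
  Real.rpow_le_rpow_of_nonpos hc hX (by linarith)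

noncomputable def FF (N : ℕ) (β : ℝ) (z : EuclideanSpace ℝ (Fin N)) : ℝ :=
  (1 + ‖z‖ ^ 2) ^ (-(β / 2))

lemma FF_pos {N : ℕ} (β : ℝ) (z : EuclideanSpace ℝ (Fin N)) : 0 < FF N β z :=
  Real.rpow_pos_of_pos (by positivity) _

lemma FF_nonneg {N : ℕ} (β : ℝ) (z : EuclideanSpace ℝ (Fin N)) : 0 ≤ FF N β z :=
  (FF_pos β z).le

lemma FF_cont {N : ℕ} (β : ℝ) : Continuous (FF N β) := by
  have h1 : Continuous fun z : EuclideanSpace ℝ (Fin N) => 1 + ‖z‖ ^ 2 := by continuity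
  exact h1.rpow_const fun z => Or.inl (by positivity)

lemma FF_add {N : ℕ} (β γ : ℝ) (z : EuclideanSpace ℝ (Fin N)) :
    FF N β z * FF N γ z = FF N (β + γ) z := by
  unfold FF
  rw [← Real.rpow_add (by positivity)]
  congr 1; ring

lemma FF_le_bound {N : ℕ} {β : ℝ} (hβ : 0 ≤ β) {c : ℝ} (hc : 0 < c)
    {z : EuclideanSpace ℝ (Fin N)} (h : c ≤ 1 + ‖z‖ ^ 2) : FF N β z ≤ c ^ (-(β / 2)) :=
  Real.rpow_le_rpow_of_nonpos hc h (by linarith [div_nonneg hβ (by norm_num : (0:ℝ) ≤ 2)])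

lemma FF_le_one {N : ℕ} {β : ℝ} (hβ : 0 ≤ β) (z : EuclideanSpace ℝ (Fin N)) :
    FF N β z ≤ 1 := by
  have := FF_le_bound (N := N) hβ one_pos (z := z) (by nlinarith [sq_nonneg ‖z‖])
  rwa [Real.one_rpow] at this

lemma FF_peel {N : ℕ} {β δ : ℝ} (hδ : 0 ≤ δ) {c : ℝ} (hc : 0 < c)
    {z : EuclideanSpace ℝ (Fin N)} (h : c ≤ 1 + ‖z‖ ^ 2) :
    FF N β z ≤ c ^ (-(δ / 2)) * FF N (β - δ) z := by
  have h1 : FF N β z = FF N δ z * FF N (β - δ) z := by rw [FF_add]; congr 1; ring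
  rw [h1]
  exact mul_le_mul_of_nonneg_right (FF_le_bound hδ hc h) (FF_nonneg _ _)

lemma FF_peel_neg {N : ℕ} {β δ : ℝ} (hδ : 0 ≤ δ) {c : ℝ}
    {z : EuclideanSpace ℝ (Fin N)} (h : 1 + ‖z‖ ^ 2 ≤ c) :
    FF N β z ≤ c ^ (δ / 2) * FF N (β + δ) z := by
  have h1 : FF N β z = FF N (-δ) z * FF N (β + δ) z := by rw [FF_add]; congr 1; ring
  have h2 : FF N (-δ) z ≤ c ^ (δ / 2) := by
    unfold FF
    have : -(-δ / 2) = δ / 2 := by ring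
    rw [this]
    exact Real.rpow_le_rpow (by positivity) h (by positivity)
  rw [h1]
  exact mul_le_mul_of_nonneg_right h2 (FF_nonneg _ _)

lemma FF_norm_rpow {N : ℕ} {β ss : ℝ} (hss : 0 ≤ ss) (z : EuclideanSpace ℝ (Fin N)) :
    ‖z‖ ^ ss * FF N β z ≤ FF N (β - ss) z := by
  have h1 : ‖z‖ ^ ss ≤ (1 + ‖z‖ ^ 2) ^ (ss / 2) := by
    have h2 : ‖z‖ ^ ss = (‖z‖ ^ 2) ^ (ss / 2) := by
      rw [← Real.rpow_natCast ‖z‖ 2, ← Real.rpow_mul (norm_nonneg z)]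
      congr 1
      push_cast
      ring
    rw [h2]
    exact Real.rpow_le_rpow (by positivity) (by linarith [sq_nonneg ‖z‖]) (by positivity)
  calc ‖z‖ ^ ss * FF N β z ≤ (1 + ‖z‖ ^ 2) ^ (ss / 2) * FF N β z :=
        mul_le_mul_of_nonneg_right h1 (FF_nonneg _ _)
    _ = FF N (-ss) z * FF N β z := by
        unfold FF; congr 2; ring
    _ = FF N (β - ss) z := by rw [FF_add]; congr 1; ring

lemma FF_integrable (N : ℕ) {β : ℝ} (hβ : (N : ℝ) < β) : Integrable (FF N β) := by
  have h : ((Module.finrank ℝ (EuclideanSpace ℝ (Fin N)) : ℝ)) < β := by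
    rwa [finrank_euclideanSpace_fin]
  have h2 := integrable_rpow_neg_one_add_norm_sq (μ := (volume : Measure (EuclideanSpace ℝ (Fin N)))) h
  have h3 : ∀ z : EuclideanSpace ℝ (Fin N), (1 + ‖z‖ ^ 2) ^ (-β / 2) = FF N β z := by
    intro z; unfold FF; rw [neg_div]
  simpa [h3] using h2

lemma FF_integral_pos (N : ℕ) {β : ℝ} (hβ : (N : ℝ) < β) :
    0 < ∫ z : EuclideanSpace ℝ (Fin N), FF N β z := by
  apply (integral_pos_iff_support_of_nonneg_ae
    (ae_of_all _ fun z => FF_nonneg β z) (FF_integrable N hβ)).mpr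
  have hsub : Metric.ball (0 : EuclideanSpace ℝ (Fin N)) 1 ⊆ Function.support (FF N β) :=
    fun z _ => Function.mem_support.mpr (ne_of_gt (FF_pos β z))
  exact lt_of_lt_of_le (Metric.measure_ball_pos volume (0 : EuclideanSpace ℝ (Fin N)) one_pos)
    (measure_mono hsub)
lemma aux_regionA {q ss R r w : ℝ} (hq : 0 < q) (hs0 : 0 < ss) (hs1 : ss ≤ 1)
    (hR : 0 < R) (hr0 : 0 ≤ r) (hr : r ≤ R / 2) (hw1 : R - r ≤ w) (hw2 : w ≤ r + R) :
    |(1 + w ^ 2) ^ (-q) - (R ^ 2) ^ (-q)| ≤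
      max 1 q * (R ^ 2 / 4) ^ (-q) * ((4 / R ^ 2) ^ ss + (12 * r / R) ^ ss) := by
  set c : ℝ := R ^ 2 / 4 with hcdef
  have hc0 : 0 < c := by positivity
  have hw0 : 0 ≤ w := by linarith
  have ht0 : 0 < 1 + w ^ 2 := by positivity
  have hwl : R / 2 ≤ w := by linarith
  have hct : c ≤ 1 + w ^ 2 := by
    have h1 : (R / 2) ^ 2 ≤ w ^ 2 := pow_le_pow_left₀ (by positivity) hwl 2
    have h2 : (R / 2) ^ 2 = c := by rw [hcdef]; ring
    linarith
  have hcu : c ≤ R ^ 2 := by rw [hcdef]; nlinarith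
  have hx1 : 1 ≤ (1 + w ^ 2) / c := (one_le_div hc0).mpr hct
  have hy1 : 1 ≤ R ^ 2 / c := (one_le_div hc0).mpr hcu
  have key := aux_rpow_sub hq hx1 hy1
  rw [Real.div_rpow ht0.le hc0.le, Real.div_rpow (by positivity : (0:ℝ) ≤ R ^ 2) hc0.le] at key
  have hd0 : 0 < c ^ (-q) := Real.rpow_pos_of_pos hc0 _
  rw [div_sub_div_same, abs_div, abs_of_pos hd0, div_le_iff₀ hd0] at key
  have hmin : min 1 |(1 + w ^ 2) / c - R ^ 2 / c| ≤ (4 / R ^ 2) ^ ss + (12 * r / R) ^ ss := by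
    have habs : |(1 + w ^ 2) / c - R ^ 2 / c| = |1 + w ^ 2 - R ^ 2| / c := by
      rw [div_sub_div_same, abs_div, abs_of_pos hc0]
    have htu : |1 + w ^ 2 - R ^ 2| ≤ 1 + 3 * r * R := by
      have h1 : w ^ 2 ≤ (r + R) ^ 2 := pow_le_pow_left₀ hw0 hw2 2
      have h2 : (R - r) ^ 2 ≤ w ^ 2 := pow_le_pow_left₀ (by linarith) hw1 2
      rw [abs_le]
      constructor <;> nlinarith
    have hdivle : |1 + w ^ 2 - R ^ 2| / c ≤ 4 / R ^ 2 + 12 * r / R := by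
      rw [div_le_iff₀ hc0]
      have h3 : (4 / R ^ 2 + 12 * r / R) * c = 1 + 3 * r * R := by
        rw [hcdef]; field_simp; ring
      rw [h3]; exact htu
    calc min 1 |(1 + w ^ 2) / c - R ^ 2 / c| = min 1 (|1 + w ^ 2 - R ^ 2| / c) := by rw [habs]
      _ ≤ (|1 + w ^ 2 - R ^ 2| / c) ^ ss := aux_min_le_rpow (by positivity) hs0 hs1
      _ ≤ (4 / R ^ 2 + 12 * r / R) ^ ss :=
          Real.rpow_le_rpow (by positivity) hdivle hs0.le
      _ ≤ (4 / R ^ 2) ^ ss + (12 * r / R) ^ ss :=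
          aux_subadd (by positivity) (by positivity) hs0.le hs1
  calc |(1 + w ^ 2) ^ (-q) - (R ^ 2) ^ (-q)|
      ≤ max 1 q * min 1 |(1 + w ^ 2) / c - R ^ 2 / c| * c ^ (-q) := key
    _ ≤ max 1 q * ((4 / R ^ 2) ^ ss + (12 * r / R) ^ ss) * c ^ (-q) :=
        mul_le_mul_of_nonneg_right
          (mul_le_mul_of_nonneg_left hmin (le_trans one_pos.le (le_max_left _ _))) hd0.le
    _ = max 1 q * c ^ (-q) * ((4 / R ^ 2) ^ ss + (12 * r / R) ^ ss) := by ring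

set_option maxHeartbeats 1000000 in
lemma aux_core (N : ℕ) (hN : 3 ≤ N) {s Λ₁ : ℝ} (hs0 : 0 < s) (hs1 : s < 1) (hΛ : 0 < Λ₁) :
    ∃ C₀ > 0, ∀ v : EuclideanSpace ℝ (Fin N), Λ₁ ≤ ‖v‖ →
      |(∫ z : EuclideanSpace ℝ (Fin N),
          FF N ((N:ℝ) + 2*s) z * FF N ((N:ℝ) - 2*s) (z - v)) -
        (∫ z : EuclideanSpace ℝ (Fin N), FF N ((N:ℝ) + 2*s) z) * ‖v‖ ^ (-((N:ℝ) - 2*s))|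
      ≤ C₀ * ‖v‖ ^ (-((N:ℝ) - 2*s + s/2)) := by
  have hn3 : (3:ℝ) ≤ (N:ℝ) := by exact_mod_cast hN
  have hν : (1:ℝ) ≤ (N:ℝ) - 2*s := by linarith
  have ifA : Integrable (FF N ((N:ℝ)+2*s)) := FF_integrable N (by linarith)
  have ihB : Integrable (FF N ((N:ℝ)+s)) := FF_integrable N (by linarith)
  have ihC : Integrable (FF N ((N:ℝ)+s/2)) := FF_integrable N (by linarith)
  set A := ∫ z : EuclideanSpace ℝ (Fin N), FF N ((N:ℝ)+2*s) z with hAdef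
  set IB := ∫ z : EuclideanSpace ℝ (Fin N), FF N ((N:ℝ)+s) z with hIBdef
  set IC := ∫ z : EuclideanSpace ℝ (Fin N), FF N ((N:ℝ)+s/2) z with hICdef
  have hA : 0 < A := FF_integral_pos N (by linarith)
  have hIB : 0 < IB := FF_integral_pos N (by linarith)
  have hIC : 0 < IC := FF_integral_pos N (by linarith)
  set K := max (1:ℝ) (((N:ℝ)-2*s)/2) with hKdef
  have hK : 0 < K := lt_of_lt_of_le one_pos (le_max_left _ _)
  refine ⟨K * 4^(((N:ℝ)-2*s)/2) * 4^s * A * Λ₁^(-(2*s - s/2))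
    + K * 4^(((N:ℝ)-2*s)/2) * 12^s * IB * Λ₁^(-(s - s/2))
    + 4^(s/2) * IB * Λ₁^(-(s - s/2))
    + 4^(((N:ℝ)+2*s)/2) * (1+Λ₁⁻¹^2)^((5*s/2)/2) * IC * Λ₁^(-(3*s/2 - s/2))
    + 4^(((N:ℝ)-2*s)/2) * 4^(s/2) * IB * Λ₁^(-(s - s/2)), by positivity, fun v hv => ?_⟩
  have hR0 : (0:ℝ) < ‖v‖ := lt_of_lt_of_le hΛ hv
  set R := ‖v‖ with hRdef
  -- power helpers
  have hsq : ∀ e : ℝ, ((R:ℝ)^2) ^ e = R ^ (2*e) := by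
    intro e
    rw [← Real.rpow_natCast R 2, ← Real.rpow_mul hR0.le]
    norm_num
  have hquart : ∀ e : ℝ, (R^2/4) ^ (-e) = 4^e * R^(-(2*e)) := by
    intro e
    rw [Real.div_rpow (by positivity) (by norm_num), hsq, mul_neg,
      Real.rpow_neg (by norm_num : (0:ℝ) ≤ 4), div_eq_mul_inv, inv_inv, mul_comm]
  have hfinal : ∀ cc dd : ℝ, 0 ≤ cc → s/2 ≤ dd →
      cc * R^(-(((N:ℝ)-2*s) + dd)) ≤
        cc * Λ₁^(-(dd - s/2)) * R^(-(((N:ℝ)-2*s) + s/2)) := by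
    intro cc dd hcc hdd
    have h1 : R^(-(((N:ℝ)-2*s) + dd)) = R^(-(dd - s/2)) * R^(-(((N:ℝ)-2*s) + s/2)) := by
      rw [← Real.rpow_add hR0]; congr 1; ring
    rw [h1, ← mul_assoc]
    apply mul_le_mul_of_nonneg_right _ (Real.rpow_nonneg hR0.le _)
    exact mul_le_mul_of_nonneg_left (aux_base_antitone hΛ hv (by linarith)) hcc
  set S := Metric.closedBall (0 : EuclideanSpace ℝ (Fin N)) (R/2) with hSdef
  set T := Metric.closedBall v (R/2) with hTdef
  have hmemS : ∀ z : EuclideanSpace ℝ (Fin N), z ∈ S → ‖z‖ ≤ R/2 := by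
    intro z hz
    simpa [hSdef, Metric.mem_closedBall, dist_zero_right] using hz
  have hmemSc : ∀ z : EuclideanSpace ℝ (Fin N), z ∉ S → R^2/4 ≤ 1 + ‖z‖^2 := by
    intro z hz
    have h1 : R/2 < ‖z‖ := by
      by_contra h
      exact hz (by simpa [hSdef, Metric.mem_closedBall, dist_zero_right] using le_of_not_gt h)
    nlinarith [norm_nonneg z]
  have hmemTc : ∀ z : EuclideanSpace ℝ (Fin N), z ∉ T → R^2/4 ≤ 1 + ‖z - v‖^2 := by
    intro z hz
    have h1 : R/2 < ‖z - v‖ := by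
      by_contra h
      exact hz (by simpa [hTdef, Metric.mem_closedBall, dist_eq_norm] using le_of_not_gt h)
    nlinarith [norm_nonneg (z - v)]
  -- integrability
  have contfg : Continuous (fun z : EuclideanSpace ℝ (Fin N) =>
      FF N ((N:ℝ)+2*s) z * FF N ((N:ℝ)-2*s) (z - v)) :=
    (FF_cont _).mul ((FF_cont _).comp (continuous_id.sub continuous_const))
  have hfg : Integrable (fun z : EuclideanSpace ℝ (Fin N) =>
      FF N ((N:ℝ)+2*s) z * FF N ((N:ℝ)-2*s) (z - v)) := by
    apply Integrable.mono ifA contfg.aestronglyMeasurable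
    apply ae_of_all
    intro z
    rw [Real.norm_eq_abs, Real.norm_eq_abs,
      abs_of_nonneg (mul_nonneg (FF_nonneg _ _) (FF_nonneg _ _)), abs_of_nonneg (FF_nonneg _ _)]
    calc FF N ((N:ℝ)+2*s) z * FF N ((N:ℝ)-2*s) (z - v)
        ≤ FF N ((N:ℝ)+2*s) z * 1 :=
          mul_le_mul_of_nonneg_left (FF_le_one (by linarith) _) (FF_nonneg _ _)
      _ = FF N ((N:ℝ)+2*s) z := mul_one _
  have hfR : Integrable (fun z : EuclideanSpace ℝ (Fin N) =>
      FF N ((N:ℝ)+2*s) z * R^(-((N:ℝ)-2*s))) := ifA.mul_const _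
  have hh : Integrable (fun z : EuclideanSpace ℝ (Fin N) =>
      FF N ((N:ℝ)+2*s) z * FF N ((N:ℝ)-2*s) (z - v) -
        FF N ((N:ℝ)+2*s) z * R^(-((N:ℝ)-2*s))) := hfg.sub hfR
  -- identity
  have hident : (∫ z : EuclideanSpace ℝ (Fin N),
        FF N ((N:ℝ)+2*s) z * FF N ((N:ℝ)-2*s) (z - v)) - A * R^(-((N:ℝ)-2*s))
      = ∫ z : EuclideanSpace ℝ (Fin N),
          (FF N ((N:ℝ)+2*s) z * FF N ((N:ℝ)-2*s) (z - v) -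
            FF N ((N:ℝ)+2*s) z * R^(-((N:ℝ)-2*s))) := by
    rw [integral_sub hfg hfR, integral_mul_const]
  rw [hident]
  have habs : |∫ z : EuclideanSpace ℝ (Fin N),
        (FF N ((N:ℝ)+2*s) z * FF N ((N:ℝ)-2*s) (z - v) -
          FF N ((N:ℝ)+2*s) z * R^(-((N:ℝ)-2*s)))|
      ≤ ∫ z : EuclideanSpace ℝ (Fin N),
          |FF N ((N:ℝ)+2*s) z * FF N ((N:ℝ)-2*s) (z - v) -
            FF N ((N:ℝ)+2*s) z * R^(-((N:ℝ)-2*s))| := by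
    simpa [Real.norm_eq_abs] using norm_integral_le_integral_norm (μ := volume)
      (f := fun z : EuclideanSpace ℝ (Fin N) =>
        FF N ((N:ℝ)+2*s) z * FF N ((N:ℝ)-2*s) (z - v) -
          FF N ((N:ℝ)+2*s) z * R^(-((N:ℝ)-2*s)))
  have hsplit : (∫ z : EuclideanSpace ℝ (Fin N),
        |FF N ((N:ℝ)+2*s) z * FF N ((N:ℝ)-2*s) (z - v) -
          FF N ((N:ℝ)+2*s) z * R^(-((N:ℝ)-2*s))|)
      = (∫ z in S, |FF N ((N:ℝ)+2*s) z * FF N ((N:ℝ)-2*s) (z - v) -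
          FF N ((N:ℝ)+2*s) z * R^(-((N:ℝ)-2*s))|)
        + ∫ z in Sᶜ, |FF N ((N:ℝ)+2*s) z * FF N ((N:ℝ)-2*s) (z - v) -
          FF N ((N:ℝ)+2*s) z * R^(-((N:ℝ)-2*s))| :=
    (integral_add_compl (measurableSet_closedBall) hh.abs).symm
  have boundS : (∫ z in S, |FF N ((N:ℝ)+2*s) z * FF N ((N:ℝ)-2*s) (z - v) -
          FF N ((N:ℝ)+2*s) z * R^(-((N:ℝ)-2*s))|)
      ≤ (K * 4^(((N:ℝ)-2*s)/2) * 4^s * A * Λ₁^(-(2*s - s/2))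
        + K * 4^(((N:ℝ)-2*s)/2) * 12^s * IB * Λ₁^(-(s - s/2)))
          * R^(-(((N:ℝ)-2*s) + s/2)) := by
    have hpt : ∀ z ∈ S, |FF N ((N:ℝ)+2*s) z * FF N ((N:ℝ)-2*s) (z - v) -
          FF N ((N:ℝ)+2*s) z * R^(-((N:ℝ)-2*s))|
        ≤ (K * (R^2/4)^(-(((N:ℝ)-2*s)/2))) *
            ((4/R^2)^s * FF N ((N:ℝ)+2*s) z + 12^s * R^(-s) * FF N ((N:ℝ)+s) z) := by
      intro z hz
      have hz2 : ‖z‖ ≤ R/2 := hmemS z hz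
      have hw1 : R - ‖z‖ ≤ ‖z - v‖ := by
        have h1 := norm_sub_norm_le v z
        rw [norm_sub_rev] at h1
        linarith
      have hw2 : ‖z - v‖ ≤ ‖z‖ + R := norm_sub_le z v
      have key := aux_regionA (q := ((N:ℝ)-2*s)/2) (ss := s) (R := R) (r := ‖z‖) (w := ‖z - v‖)
        (by linarith) hs0 hs1.le hR0 (norm_nonneg z) hz2 hw1 hw2
      rw [← hKdef] at key
      have e1 : FF N ((N:ℝ)-2*s) (z - v) = (1 + ‖z - v‖^2) ^ (-(((N:ℝ)-2*s)/2)) := rfl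
      have e2 : R ^ (-((N:ℝ)-2*s)) = (R^2) ^ (-(((N:ℝ)-2*s)/2)) := by
        rw [hsq]; congr 1; ring
      rw [← e1, ← e2] at key
      have e3 : |FF N ((N:ℝ)+2*s) z * FF N ((N:ℝ)-2*s) (z - v) -
            FF N ((N:ℝ)+2*s) z * R^(-((N:ℝ)-2*s))|
          = FF N ((N:ℝ)+2*s) z * |FF N ((N:ℝ)-2*s) (z - v) - R^(-((N:ℝ)-2*s))| := by
        rw [← mul_sub, abs_mul, abs_of_nonneg (FF_nonneg _ _)]
      have eY : (12*‖z‖/R : ℝ)^s = 12^s * R^(-s) * ‖z‖^s := by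
        rw [Real.div_rpow (by positivity) hR0.le,
          Real.mul_rpow (by norm_num : (0:ℝ) ≤ 12) (norm_nonneg z), div_eq_mul_inv,
          ← Real.rpow_neg hR0.le]
        ring
      have hYf : ‖z‖^s * FF N ((N:ℝ)+2*s) z ≤ FF N ((N:ℝ)+s) z := by
        have h5 := FF_norm_rpow (N := N) (β := (N:ℝ)+2*s) hs0.le z
        have h6 : (N:ℝ)+2*s-s = (N:ℝ)+s := by ring
        rwa [h6] at h5
      rw [e3]
      calc FF N ((N:ℝ)+2*s) z * |FF N ((N:ℝ)-2*s) (z - v) - R^(-((N:ℝ)-2*s))|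
          ≤ FF N ((N:ℝ)+2*s) z * (K * (R^2/4)^(-(((N:ℝ)-2*s)/2)) *
              ((4/R^2)^s + (12*‖z‖/R)^s)) := mul_le_mul_of_nonneg_left key (FF_nonneg _ _)
        _ = (K * (R^2/4)^(-(((N:ℝ)-2*s)/2))) *
              ((4/R^2)^s * FF N ((N:ℝ)+2*s) z + 12^s * R^(-s) * (‖z‖^s * FF N ((N:ℝ)+2*s) z)) := by
            rw [eY]; ring
        _ ≤ (K * (R^2/4)^(-(((N:ℝ)-2*s)/2))) *
              ((4/R^2)^s * FF N ((N:ℝ)+2*s) z + 12^s * R^(-s) * FF N ((N:ℝ)+s) z) := by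
            have hC : (0:ℝ) ≤ K * (R^2/4)^(-(((N:ℝ)-2*s)/2)) := by positivity
            apply mul_le_mul_of_nonneg_left _ hC
            apply add_le_add_right
            exact mul_le_mul_of_nonneg_left hYf (by positivity)
    have hMint : Integrable (fun z : EuclideanSpace ℝ (Fin N) =>
        (K * (R^2/4)^(-(((N:ℝ)-2*s)/2))) *
          ((4/R^2)^s * FF N ((N:ℝ)+2*s) z + 12^s * R^(-s) * FF N ((N:ℝ)+s) z)) := by
      have h1 : Integrable (fun z : EuclideanSpace ℝ (Fin N) =>
          (4/R^2)^s * FF N ((N:ℝ)+2*s) z) := ifA.const_mul _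
      have h2 : Integrable (fun z : EuclideanSpace ℝ (Fin N) =>
          12^s * R^(-s) * FF N ((N:ℝ)+s) z) := by
        have := ihB.const_mul (12^s * R^(-s))
        simpa [mul_assoc] using this
      exact (h1.add h2).const_mul _
    have hint1 : (∫ z in S, |FF N ((N:ℝ)+2*s) z * FF N ((N:ℝ)-2*s) (z - v) -
            FF N ((N:ℝ)+2*s) z * R^(-((N:ℝ)-2*s))|)
        ≤ ∫ z in S, (K * (R^2/4)^(-(((N:ℝ)-2*s)/2))) *
            ((4/R^2)^s * FF N ((N:ℝ)+2*s) z + 12^s * R^(-s) * FF N ((N:ℝ)+s) z) :=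
      setIntegral_mono_on hh.abs.integrableOn hMint.integrableOn measurableSet_closedBall hpt
    have hint2 : (∫ z in S, (K * (R^2/4)^(-(((N:ℝ)-2*s)/2))) *
            ((4/R^2)^s * FF N ((N:ℝ)+2*s) z + 12^s * R^(-s) * FF N ((N:ℝ)+s) z))
        ≤ ∫ z : EuclideanSpace ℝ (Fin N), (K * (R^2/4)^(-(((N:ℝ)-2*s)/2))) *
            ((4/R^2)^s * FF N ((N:ℝ)+2*s) z + 12^s * R^(-s) * FF N ((N:ℝ)+s) z) := by
      apply setIntegral_le_integral hMint
      apply ae_of_all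
      intro z
      have h1 := FF_nonneg (N := N) ((N:ℝ)+2*s) z
      have h2 := FF_nonneg (N := N) ((N:ℝ)+s) z
      positivity
    have hval : (∫ z : EuclideanSpace ℝ (Fin N), (K * (R^2/4)^(-(((N:ℝ)-2*s)/2))) *
            ((4/R^2)^s * FF N ((N:ℝ)+2*s) z + 12^s * R^(-s) * FF N ((N:ℝ)+s) z))
        = (K * (R^2/4)^(-(((N:ℝ)-2*s)/2))) * ((4/R^2)^s * A + (12^s * R^(-s)) * IB) := by
      rw [integral_const_mul]
      congr 1
      have h1 : Integrable (fun z : EuclideanSpace ℝ (Fin N) =>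
          (4/R^2)^s * FF N ((N:ℝ)+2*s) z) := ifA.const_mul _
      have h2 : Integrable (fun z : EuclideanSpace ℝ (Fin N) =>
          12^s * R^(-s) * FF N ((N:ℝ)+s) z) := by
        have := ihB.const_mul (12^s * R^(-s))
        simpa [mul_assoc] using this
      rw [integral_add h1 h2, integral_const_mul, integral_const_mul]
    have e5 : (4/R^2 : ℝ)^s = 4^s * R^(-(2*s)) := by
      rw [Real.div_rpow (by norm_num : (0:ℝ) ≤ 4) (by positivity : (0:ℝ) ≤ R^2), hsq,
        div_eq_mul_inv, ← Real.rpow_neg hR0.le]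
    have harith : (K * (R^2/4)^(-(((N:ℝ)-2*s)/2))) * ((4/R^2)^s * A + (12^s * R^(-s)) * IB)
        = (K * 4^(((N:ℝ)-2*s)/2) * 4^s * A) * R^(-(((N:ℝ)-2*s) + 2*s))
          + (K * 4^(((N:ℝ)-2*s)/2) * 12^s * IB) * R^(-(((N:ℝ)-2*s) + s)) := by
      rw [hquart, e5]
      have c1 : R^(-(2*(((N:ℝ)-2*s)/2))) * R^(-(2*s)) = R^(-(((N:ℝ)-2*s) + 2*s)) := by
        rw [← Real.rpow_add hR0]; congr 1; ring
      have c2 : R^(-(2*(((N:ℝ)-2*s)/2))) * R^(-s) = R^(-(((N:ℝ)-2*s) + s)) := by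
        rw [← Real.rpow_add hR0]; congr 1; ring
      calc (K * (4^(((N:ℝ)-2*s)/2) * R^(-(2*(((N:ℝ)-2*s)/2))))) *
            ((4^s * R^(-(2*s))) * A + (12^s * R^(-s)) * IB)
          = (K * 4^(((N:ℝ)-2*s)/2) * 4^s * A) * (R^(-(2*(((N:ℝ)-2*s)/2))) * R^(-(2*s)))
            + (K * 4^(((N:ℝ)-2*s)/2) * 12^s * IB) * (R^(-(2*(((N:ℝ)-2*s)/2))) * R^(-s)) := by
            ring
        _ = _ := by rw [c1, c2]
    calc (∫ z in S, |FF N ((N:ℝ)+2*s) z * FF N ((N:ℝ)-2*s) (z - v) -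
            FF N ((N:ℝ)+2*s) z * R^(-((N:ℝ)-2*s))|)
        ≤ (K * 4^(((N:ℝ)-2*s)/2) * 4^s * A) * R^(-(((N:ℝ)-2*s) + 2*s))
          + (K * 4^(((N:ℝ)-2*s)/2) * 12^s * IB) * R^(-(((N:ℝ)-2*s) + s)) := by
          rw [← harith, ← hval]
          exact le_trans hint1 hint2
      _ ≤ (K * 4^(((N:ℝ)-2*s)/2) * 4^s * A) * Λ₁^(-(2*s - s/2)) * R^(-(((N:ℝ)-2*s) + s/2))
          + (K * 4^(((N:ℝ)-2*s)/2) * 12^s * IB) * Λ₁^(-(s - s/2)) * R^(-(((N:ℝ)-2*s) + s/2)) := by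
          apply add_le_add
          · exact hfinal _ _ (by positivity) (by linarith)
          · exact hfinal _ _ (by positivity) (by linarith)
      _ = (K * 4^(((N:ℝ)-2*s)/2) * 4^s * A * Λ₁^(-(2*s - s/2))
        + K * 4^(((N:ℝ)-2*s)/2) * 12^s * IB * Λ₁^(-(s - s/2)))
          * R^(-(((N:ℝ)-2*s) + s/2)) := by ring
  have boundSc : (∫ z in Sᶜ, |FF N ((N:ℝ)+2*s) z * FF N ((N:ℝ)-2*s) (z - v) -
          FF N ((N:ℝ)+2*s) z * R^(-((N:ℝ)-2*s))|)
      ≤ (4^(s/2) * IB * Λ₁^(-(s - s/2))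
        + 4^(((N:ℝ)+2*s)/2) * (1+Λ₁⁻¹^2)^((5*s/2)/2) * IC * Λ₁^(-(3*s/2 - s/2))
        + 4^(((N:ℝ)-2*s)/2) * 4^(s/2) * IB * Λ₁^(-(s - s/2)))
          * R^(-(((N:ℝ)-2*s) + s/2)) := by
    have hScMeas : MeasurableSet Sᶜ := measurableSet_closedBall.compl
    -- pointwise triangle bound
    have hpt2 : ∀ z : EuclideanSpace ℝ (Fin N),
        |FF N ((N:ℝ)+2*s) z * FF N ((N:ℝ)-2*s) (z - v) -
          FF N ((N:ℝ)+2*s) z * R^(-((N:ℝ)-2*s))|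
        ≤ FF N ((N:ℝ)+2*s) z * FF N ((N:ℝ)-2*s) (z - v) +
          FF N ((N:ℝ)+2*s) z * R^(-((N:ℝ)-2*s)) := by
      intro z
      have h1 : (0:ℝ) ≤ FF N ((N:ℝ)+2*s) z * FF N ((N:ℝ)-2*s) (z - v) :=
        mul_nonneg (FF_nonneg _ _) (FF_nonneg _ _)
      have h2 : (0:ℝ) ≤ FF N ((N:ℝ)+2*s) z * R^(-((N:ℝ)-2*s)) :=
        mul_nonneg (FF_nonneg _ _) (Real.rpow_nonneg hR0.le _)
      calc |FF N ((N:ℝ)+2*s) z * FF N ((N:ℝ)-2*s) (z - v) -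
            FF N ((N:ℝ)+2*s) z * R^(-((N:ℝ)-2*s))|
          ≤ |FF N ((N:ℝ)+2*s) z * FF N ((N:ℝ)-2*s) (z - v)| +
            |FF N ((N:ℝ)+2*s) z * R^(-((N:ℝ)-2*s))| := abs_sub _ _
        _ = _ := by rw [abs_of_nonneg h1, abs_of_nonneg h2]
    -- tail integral bound
    have hTail : (∫ z in Sᶜ, FF N ((N:ℝ)+2*s) z) ≤ (4^(s/2) * R^(-s)) * IB := by
      have hptT : ∀ z ∈ Sᶜ, FF N ((N:ℝ)+2*s) z ≤
          (R^2/4)^(-(s/2)) * FF N ((N:ℝ)+s) z := by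
        intro z hz
        have := FF_peel (N := N) (β := (N:ℝ)+2*s) (δ := s) hs0.le (by positivity)
          (hmemSc z hz)
        have h6 : (N:ℝ)+2*s-s = (N:ℝ)+s := by ring
        rwa [h6] at this
      have e8 : (R^2/4 : ℝ)^(-(s/2)) = 4^(s/2) * R^(-s) := by
        rw [hquart]
        have h7 : 2*(s/2) = s := by ring
        rw [h7]
      calc (∫ z in Sᶜ, FF N ((N:ℝ)+2*s) z)
          ≤ ∫ z in Sᶜ, (R^2/4)^(-(s/2)) * FF N ((N:ℝ)+s) z :=
            setIntegral_mono_on ifA.integrableOn ((ihB.const_mul _).integrableOn)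
              hScMeas hptT
        _ = (R^2/4)^(-(s/2)) * ∫ z in Sᶜ, FF N ((N:ℝ)+s) z := integral_const_mul _ _
        _ ≤ (R^2/4)^(-(s/2)) * IB := by
            apply mul_le_mul_of_nonneg_left _ (by positivity)
            exact setIntegral_le_integral ihB (ae_of_all _ fun z => FF_nonneg _ _)
        _ = (4^(s/2) * R^(-s)) * IB := by rw [e8]
    -- the R^{-nu} term over S^c
    have hfRterm : (∫ z in Sᶜ, FF N ((N:ℝ)+2*s) z * R^(-((N:ℝ)-2*s)))
        ≤ (4^(s/2) * IB) * R^(-(((N:ℝ)-2*s) + s)) := by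
      rw [integral_mul_const]
      calc (∫ z in Sᶜ, FF N ((N:ℝ)+2*s) z) * R^(-((N:ℝ)-2*s))
          ≤ ((4^(s/2) * R^(-s)) * IB) * R^(-((N:ℝ)-2*s)) :=
            mul_le_mul_of_nonneg_right hTail (Real.rpow_nonneg hR0.le _)
        _ = (4^(s/2) * IB) * (R^(-s) * R^(-((N:ℝ)-2*s))) := by ring
        _ = (4^(s/2) * IB) * R^(-(((N:ℝ)-2*s) + s)) := by
            rw [← Real.rpow_add hR0]
            congr 1
            ring
    -- integrability of the shifted kernel on T
    have hgT : IntegrableOn (fun z : EuclideanSpace ℝ (Fin N) =>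
        FF N ((N:ℝ)-2*s) (z - v)) T := by
      apply ContinuousOn.integrableOn_compact (isCompact_closedBall v (R/2))
      exact (((FF_cont _).comp (continuous_id.sub continuous_const))).continuousOn
    -- piece 2 : region S^c \ T
    have hpiece2 : (∫ z in Sᶜ \ T, FF N ((N:ℝ)+2*s) z * FF N ((N:ℝ)-2*s) (z - v))
        ≤ (4^(((N:ℝ)-2*s)/2) * 4^(s/2) * IB) * R^(-(((N:ℝ)-2*s) + s)) := by
      have hptP2 : ∀ z ∈ Sᶜ \ T, FF N ((N:ℝ)+2*s) z * FF N ((N:ℝ)-2*s) (z - v)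
          ≤ (R^2/4)^(-(((N:ℝ)-2*s)/2)) * FF N ((N:ℝ)+2*s) z := by
        intro z hz
        have h1 : FF N ((N:ℝ)-2*s) (z - v) ≤ (R^2/4)^(-(((N:ℝ)-2*s)/2)) :=
          FF_le_bound (by linarith) (by positivity) (hmemTc z hz.2)
        calc FF N ((N:ℝ)+2*s) z * FF N ((N:ℝ)-2*s) (z - v)
            ≤ FF N ((N:ℝ)+2*s) z * (R^2/4)^(-(((N:ℝ)-2*s)/2)) :=
              mul_le_mul_of_nonneg_left h1 (FF_nonneg _ _)
          _ = (R^2/4)^(-(((N:ℝ)-2*s)/2)) * FF N ((N:ℝ)+2*s) z := mul_comm _ _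
      calc (∫ z in Sᶜ \ T, FF N ((N:ℝ)+2*s) z * FF N ((N:ℝ)-2*s) (z - v))
          ≤ ∫ z in Sᶜ \ T, (R^2/4)^(-(((N:ℝ)-2*s)/2)) * FF N ((N:ℝ)+2*s) z :=
            setIntegral_mono_on (hfg.integrableOn) ((ifA.const_mul _).integrableOn)
              (hScMeas.diff measurableSet_closedBall) hptP2
        _ = (R^2/4)^(-(((N:ℝ)-2*s)/2)) * ∫ z in Sᶜ \ T, FF N ((N:ℝ)+2*s) z :=
            integral_const_mul _ _
        _ ≤ (R^2/4)^(-(((N:ℝ)-2*s)/2)) * ∫ z in Sᶜ, FF N ((N:ℝ)+2*s) z := by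
            apply mul_le_mul_of_nonneg_left _ (by positivity)
            apply setIntegral_mono_set ifA.integrableOn
              (ae_of_all _ fun z => FF_nonneg _ _)
            exact HasSubset.Subset.eventuallyLE Set.diff_subset
        _ ≤ (R^2/4)^(-(((N:ℝ)-2*s)/2)) * ((4^(s/2) * R^(-s)) * IB) :=
            mul_le_mul_of_nonneg_left hTail (by positivity)
        _ = (4^(((N:ℝ)-2*s)/2) * 4^(s/2) * IB) *
            (R^(-(2*(((N:ℝ)-2*s)/2))) * R^(-s)) := by
            rw [hquart]
            ring
        _ = (4^(((N:ℝ)-2*s)/2) * 4^(s/2) * IB) * R^(-(((N:ℝ)-2*s) + s)) := by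
            rw [← Real.rpow_add hR0]
            congr 1
            ring
    -- piece 1 : region S^c inter T
    have htrans : (∫ z in T, FF N ((N:ℝ)-2*s) (z - v))
        = ∫ w in Metric.closedBall (0 : EuclideanSpace ℝ (Fin N)) (R/2),
            FF N ((N:ℝ)-2*s) w := by
      rw [← integral_indicator measurableSet_closedBall,
        ← integral_indicator measurableSet_closedBall]
      have hsind : ∀ z : EuclideanSpace ℝ (Fin N),
          T.indicator (fun z => FF N ((N:ℝ)-2*s) (z - v)) z
          = (Metric.closedBall (0 : EuclideanSpace ℝ (Fin N)) (R/2)).indicator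
              (FF N ((N:ℝ)-2*s)) (z - v) := by
        intro z
        have hmem : z ∈ T ↔ z - v ∈ Metric.closedBall (0 : EuclideanSpace ℝ (Fin N)) (R/2) := by
          simp [hTdef, Metric.mem_closedBall, dist_eq_norm, dist_zero_right]
        by_cases hz : z ∈ T
        · rw [Set.indicator_of_mem hz, Set.indicator_of_mem (hmem.mp hz)]
        · rw [Set.indicator_of_notMem hz,
            Set.indicator_of_notMem (fun h => hz (hmem.mpr h))]
      rw [integral_congr_ae (ae_of_all _ hsind)]
      exact integral_sub_right_eq_self
        ((Metric.closedBall (0 : EuclideanSpace ℝ (Fin N)) (R/2)).indicator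
          (FF N ((N:ℝ)-2*s))) v
    have hball : (∫ w in Metric.closedBall (0 : EuclideanSpace ℝ (Fin N)) (R/2),
          FF N ((N:ℝ)-2*s) w)
        ≤ ((1+Λ₁⁻¹^2) * R^2)^((5*s/2)/2) * IC := by
      have hgball : IntegrableOn (FF N ((N:ℝ)-2*s))
          (Metric.closedBall (0 : EuclideanSpace ℝ (Fin N)) (R/2)) :=
        ContinuousOn.integrableOn_compact (isCompact_closedBall _ _) (FF_cont _).continuousOn
      have hcbound : ∀ w : EuclideanSpace ℝ (Fin N),
          w ∈ Metric.closedBall (0 : EuclideanSpace ℝ (Fin N)) (R/2) →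
          1 + ‖w‖^2 ≤ (1+Λ₁⁻¹^2) * R^2 := by
        intro w hw
        have h1 : ‖w‖ ≤ R/2 := by
          simpa [Metric.mem_closedBall, dist_zero_right] using hw
        have h2 : Λ₁^2 ≤ R^2 := pow_le_pow_left₀ hΛ.le hv 2
        have h3 : (1:ℝ) ≤ Λ₁⁻¹^2 * R^2 := by
          have h5 : Λ₁⁻¹^2 * Λ₁^2 = 1 := by field_simp
          nlinarith [sq_nonneg Λ₁⁻¹]
        have h4 : ‖w‖^2 ≤ R^2/4 := by nlinarith [norm_nonneg w]
        nlinarith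
      have hptB : ∀ w ∈ Metric.closedBall (0 : EuclideanSpace ℝ (Fin N)) (R/2),
          FF N ((N:ℝ)-2*s) w ≤
            ((1+Λ₁⁻¹^2) * R^2)^((5*s/2)/2) * FF N ((N:ℝ)+s/2) w := by
        intro w hw
        have := FF_peel_neg (N := N) (β := (N:ℝ)-2*s) (δ := 5*s/2)
          (by positivity) (hcbound w hw)
        have h6 : (N:ℝ)-2*s+5*s/2 = (N:ℝ)+s/2 := by ring
        rwa [h6] at this
      calc (∫ w in Metric.closedBall (0 : EuclideanSpace ℝ (Fin N)) (R/2),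
            FF N ((N:ℝ)-2*s) w)
          ≤ ∫ w in Metric.closedBall (0 : EuclideanSpace ℝ (Fin N)) (R/2),
              ((1+Λ₁⁻¹^2) * R^2)^((5*s/2)/2) * FF N ((N:ℝ)+s/2) w :=
            setIntegral_mono_on hgball ((ihC.const_mul _).integrableOn)
              measurableSet_closedBall hptB
        _ = ((1+Λ₁⁻¹^2) * R^2)^((5*s/2)/2) *
              ∫ w in Metric.closedBall (0 : EuclideanSpace ℝ (Fin N)) (R/2),
                FF N ((N:ℝ)+s/2) w := integral_const_mul _ _
        _ ≤ ((1+Λ₁⁻¹^2) * R^2)^((5*s/2)/2) * IC := by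
            apply mul_le_mul_of_nonneg_left _ (by positivity)
            exact setIntegral_le_integral ihC (ae_of_all _ fun z => FF_nonneg _ _)
    have hpiece1 : (∫ z in Sᶜ ∩ T, FF N ((N:ℝ)+2*s) z * FF N ((N:ℝ)-2*s) (z - v))
        ≤ (4^(((N:ℝ)+2*s)/2) * (1+Λ₁⁻¹^2)^((5*s/2)/2) * IC) *
            R^(-(((N:ℝ)-2*s) + 3*s/2)) := by
      have hptP1 : ∀ z ∈ Sᶜ ∩ T, FF N ((N:ℝ)+2*s) z * FF N ((N:ℝ)-2*s) (z - v)
          ≤ (R^2/4)^(-(((N:ℝ)+2*s)/2)) * FF N ((N:ℝ)-2*s) (z - v) := by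
        intro z hz
        have h1 : FF N ((N:ℝ)+2*s) z ≤ (R^2/4)^(-(((N:ℝ)+2*s)/2)) :=
          FF_le_bound (by linarith) (by positivity) (hmemSc z hz.1)
        exact mul_le_mul_of_nonneg_right h1 (FF_nonneg _ _)
      have hIOn : IntegrableOn (fun z : EuclideanSpace ℝ (Fin N) =>
          (R^2/4)^(-(((N:ℝ)+2*s)/2)) * FF N ((N:ℝ)-2*s) (z - v)) (Sᶜ ∩ T) :=
        IntegrableOn.mono_set (hgT.const_mul _) Set.inter_subset_right
      calc (∫ z in Sᶜ ∩ T, FF N ((N:ℝ)+2*s) z * FF N ((N:ℝ)-2*s) (z - v))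
          ≤ ∫ z in Sᶜ ∩ T, (R^2/4)^(-(((N:ℝ)+2*s)/2)) * FF N ((N:ℝ)-2*s) (z - v) :=
            setIntegral_mono_on (hfg.integrableOn)
              hIOn (hScMeas.inter measurableSet_closedBall) hptP1
        _ = (R^2/4)^(-(((N:ℝ)+2*s)/2)) * ∫ z in Sᶜ ∩ T, FF N ((N:ℝ)-2*s) (z - v) :=
            integral_const_mul _ _
        _ ≤ (R^2/4)^(-(((N:ℝ)+2*s)/2)) * ∫ z in T, FF N ((N:ℝ)-2*s) (z - v) := by
            apply mul_le_mul_of_nonneg_left _ (by positivity)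
            apply setIntegral_mono_set hgT (ae_of_all _ fun z => FF_nonneg _ _)
            exact HasSubset.Subset.eventuallyLE Set.inter_subset_right
        _ ≤ (R^2/4)^(-(((N:ℝ)+2*s)/2)) * (((1+Λ₁⁻¹^2) * R^2)^((5*s/2)/2) * IC) := by
            rw [htrans]
            exact mul_le_mul_of_nonneg_left hball (by positivity)
        _ = (4^(((N:ℝ)+2*s)/2) * (1+Λ₁⁻¹^2)^((5*s/2)/2) * IC) *
              (R^(-(2*(((N:ℝ)+2*s)/2))) * R^(2*((5*s/2)/2))) := by
            rw [hquart, Real.mul_rpow (by positivity) (by positivity : (0:ℝ) ≤ R^2), hsq]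
            ring
        _ = (4^(((N:ℝ)+2*s)/2) * (1+Λ₁⁻¹^2)^((5*s/2)/2) * IC) *
              R^(-(((N:ℝ)-2*s) + 3*s/2)) := by
            rw [← Real.rpow_add hR0]
            congr 1
            ring
    -- assemble
    have hsplit2 : (∫ z in Sᶜ, |FF N ((N:ℝ)+2*s) z * FF N ((N:ℝ)-2*s) (z - v) -
            FF N ((N:ℝ)+2*s) z * R^(-((N:ℝ)-2*s))|)
        ≤ (∫ z in Sᶜ, FF N ((N:ℝ)+2*s) z * FF N ((N:ℝ)-2*s) (z - v)) +
          ∫ z in Sᶜ, FF N ((N:ℝ)+2*s) z * R^(-((N:ℝ)-2*s)) := by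
      calc (∫ z in Sᶜ, |FF N ((N:ℝ)+2*s) z * FF N ((N:ℝ)-2*s) (z - v) -
              FF N ((N:ℝ)+2*s) z * R^(-((N:ℝ)-2*s))|)
          ≤ ∫ z in Sᶜ, (FF N ((N:ℝ)+2*s) z * FF N ((N:ℝ)-2*s) (z - v) +
              FF N ((N:ℝ)+2*s) z * R^(-((N:ℝ)-2*s))) :=
            setIntegral_mono_on hh.abs.integrableOn ((hfg.add hfR).integrableOn)
              hScMeas (fun z _ => hpt2 z)
        _ = _ := integral_add hfg.integrableOn hfR.integrableOn
    have hsplitT : (∫ z in Sᶜ, FF N ((N:ℝ)+2*s) z * FF N ((N:ℝ)-2*s) (z - v))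
        = (∫ z in Sᶜ ∩ T, FF N ((N:ℝ)+2*s) z * FF N ((N:ℝ)-2*s) (z - v)) +
          ∫ z in Sᶜ \ T, FF N ((N:ℝ)+2*s) z * FF N ((N:ℝ)-2*s) (z - v) :=
      (integral_inter_add_diff measurableSet_closedBall hfg.integrableOn).symm
    calc (∫ z in Sᶜ, |FF N ((N:ℝ)+2*s) z * FF N ((N:ℝ)-2*s) (z - v) -
            FF N ((N:ℝ)+2*s) z * R^(-((N:ℝ)-2*s))|)
        ≤ ((∫ z in Sᶜ ∩ T, FF N ((N:ℝ)+2*s) z * FF N ((N:ℝ)-2*s) (z - v)) +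
            ∫ z in Sᶜ \ T, FF N ((N:ℝ)+2*s) z * FF N ((N:ℝ)-2*s) (z - v)) +
          ∫ z in Sᶜ, FF N ((N:ℝ)+2*s) z * R^(-((N:ℝ)-2*s)) := by
          rw [← hsplitT]
          exact hsplit2
      _ ≤ ((4^(((N:ℝ)+2*s)/2) * (1+Λ₁⁻¹^2)^((5*s/2)/2) * IC) * R^(-(((N:ℝ)-2*s) + 3*s/2)) +
            (4^(((N:ℝ)-2*s)/2) * 4^(s/2) * IB) * R^(-(((N:ℝ)-2*s) + s))) +
          (4^(s/2) * IB) * R^(-(((N:ℝ)-2*s) + s)) :=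
          add_le_add (add_le_add hpiece1 hpiece2) hfRterm
      _ ≤ ((4^(((N:ℝ)+2*s)/2) * (1+Λ₁⁻¹^2)^((5*s/2)/2) * IC) * Λ₁^(-(3*s/2 - s/2)) *
              R^(-(((N:ℝ)-2*s) + s/2)) +
            (4^(((N:ℝ)-2*s)/2) * 4^(s/2) * IB) * Λ₁^(-(s - s/2)) *
              R^(-(((N:ℝ)-2*s) + s/2))) +
          (4^(s/2) * IB) * Λ₁^(-(s - s/2)) * R^(-(((N:ℝ)-2*s) + s/2)) := by
          apply add_le_add (add_le_add ?_ ?_) ?_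
          · exact hfinal _ _ (by positivity) (by linarith)
          · exact hfinal _ _ (by positivity) (by linarith)
          · exact hfinal _ _ (by positivity) (by linarith)
      _ = (4^(s/2) * IB * Λ₁^(-(s - s/2))
        + 4^(((N:ℝ)+2*s)/2) * (1+Λ₁⁻¹^2)^((5*s/2)/2) * IC * Λ₁^(-(3*s/2 - s/2))
        + 4^(((N:ℝ)-2*s)/2) * 4^(s/2) * IB * Λ₁^(-(s - s/2)))
          * R^(-(((N:ℝ)-2*s) + s/2)) := by ring
  calc |∫ z : EuclideanSpace ℝ (Fin N),
        (FF N ((N:ℝ)+2*s) z * FF N ((N:ℝ)-2*s) (z - v) -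
          FF N ((N:ℝ)+2*s) z * R^(-((N:ℝ)-2*s)))|
      ≤ ∫ z : EuclideanSpace ℝ (Fin N),
          |FF N ((N:ℝ)+2*s) z * FF N ((N:ℝ)-2*s) (z - v) -
            FF N ((N:ℝ)+2*s) z * R^(-((N:ℝ)-2*s))| := habs
    _ = _ + _ := hsplit
    _ ≤ _ := add_le_add boundS boundSc
    _ = (K * 4^(((N:ℝ)-2*s)/2) * 4^s * A * Λ₁^(-(2*s - s/2))
        + K * 4^(((N:ℝ)-2*s)/2) * 12^s * IB * Λ₁^(-(s - s/2))
        + 4^(s/2) * IB * Λ₁^(-(s - s/2))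
        + 4^(((N:ℝ)+2*s)/2) * (1+Λ₁⁻¹^2)^((5*s/2)/2) * IC * Λ₁^(-(3*s/2 - s/2))
        + 4^(((N:ℝ)-2*s)/2) * 4^(s/2) * IB * Λ₁^(-(s - s/2)))
          * R^(-(((N:ℝ)-2*s) + s/2)) := by ring

lemma bubble_product (N : ℕ) (hN : 3 ≤ N) {s : ℝ} (hs0 : 0 < s) (hs1 : s < 1) {Λ : ℝ}
    (hΛ : 0 < Λ) (a b y : EuclideanSpace ℝ (Fin N)) :
    bubble N s a Λ y ^ (2 * (N : ℝ) / ((N : ℝ) - 2 * s) - 1) * bubble N s b Λ y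
      = ((4:ℝ)^s * (Real.Gamma (((N:ℝ) + 2*s)/2) / Real.Gamma (((N:ℝ) - 2*s)/2))) ^ ((N:ℝ)/2)
        * Λ ^ (N:ℝ) *
        (FF N ((N:ℝ) + 2*s) (Λ • (y - a)) *
          FF N ((N:ℝ) - 2*s) (Λ • (y - a) - Λ • (b - a))) := by
  have hn3 : (3:ℝ) ≤ (N:ℝ) := by exact_mod_cast hN
  have hν : (0:ℝ) < (N:ℝ) - 2*s := by linarith
  have hX : (0:ℝ) < 1 + Λ^2 * ‖y - a‖^2 := by positivity
  have hY : (0:ℝ) < 1 + Λ^2 * ‖y - b‖^2 := by positivity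
  have hc0 : (0:ℝ) < (4:ℝ)^s * (Real.Gamma (((N:ℝ) + 2*s)/2) / Real.Gamma (((N:ℝ) - 2*s)/2)) := by
    apply mul_pos (Real.rpow_pos_of_pos (by norm_num) s)
    exact div_pos (Real.Gamma_pos_of_pos (by positivity)) (Real.Gamma_pos_of_pos (by linarith))
  have hXa : FF N ((N:ℝ) + 2*s) (Λ • (y - a)) = (1 + Λ^2 * ‖y - a‖^2) ^ (-(((N:ℝ)+2*s)/2)) := by
    have hb : ‖Λ • (y - a)‖^2 = Λ^2 * ‖y - a‖^2 := by
      rw [norm_smul, mul_pow, Real.norm_eq_abs, sq_abs]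
    simp only [FF, hb]
  have hYb : FF N ((N:ℝ) - 2*s) (Λ • (y - a) - Λ • (b - a))
      = (1 + Λ^2 * ‖y - b‖^2) ^ (-(((N:ℝ)-2*s)/2)) := by
    have hvec : Λ • (y - a) - Λ • (b - a) = Λ • (y - b) := by
      rw [← smul_sub]
      congr 1
      abel
    have hb : ‖Λ • (y - b)‖^2 = Λ^2 * ‖y - b‖^2 := by
      rw [norm_smul, mul_pow, Real.norm_eq_abs, sq_abs]
    simp only [FF, hvec, hb]
  rw [hXa, hYb]
  unfold bubble
  rw [Real.mul_rpow (Real.rpow_nonneg hc0.le _)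
    (Real.rpow_nonneg (div_nonneg hΛ.le hX.le) _),
    ← Real.rpow_mul hc0.le, ← Real.rpow_mul (div_nonneg hΛ.le hX.le)]
  have e1 : ((N:ℝ)-2*s)/4 * (2*(N:ℝ)/((N:ℝ)-2*s) - 1) = ((N:ℝ)+2*s)/4 := by
    field_simp
    ring
  have e2 : ((N:ℝ)-2*s)/2 * (2*(N:ℝ)/((N:ℝ)-2*s) - 1) = ((N:ℝ)+2*s)/2 := by
    field_simp
    ring
  rw [e1, e2]
  have hdiv : ∀ W : ℝ, 0 < W → ∀ p : ℝ, (Λ/W)^p = Λ^p * W^(-p) := by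
    intro W hW p
    rw [Real.div_rpow hΛ.le hW.le, Real.rpow_neg hW.le, div_eq_mul_inv]
  rw [hdiv _ hX, hdiv _ hY]
  have hcc : ((4:ℝ)^s * (Real.Gamma (((N:ℝ) + 2*s)/2) / Real.Gamma (((N:ℝ) - 2*s)/2)))
        ^ (((N:ℝ)+2*s)/4) *
      ((4:ℝ)^s * (Real.Gamma (((N:ℝ) + 2*s)/2) / Real.Gamma (((N:ℝ) - 2*s)/2)))
        ^ (((N:ℝ)-2*s)/4)
      = ((4:ℝ)^s * (Real.Gamma (((N:ℝ) + 2*s)/2) / Real.Gamma (((N:ℝ) - 2*s)/2))) ^ ((N:ℝ)/2) := by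
    rw [← Real.rpow_add hc0]
    congr 1
    ring
  have hΛΛ : Λ^(((N:ℝ)+2*s)/2) * Λ^(((N:ℝ)-2*s)/2) = Λ^((N:ℝ)) := by
    rw [← Real.rpow_add hΛ]
    congr 1
    ring
  calc ((4:ℝ)^s * (Real.Gamma (((N:ℝ) + 2*s)/2) / Real.Gamma (((N:ℝ) - 2*s)/2))) ^ (((N:ℝ)+2*s)/4)
        * (Λ^(((N:ℝ)+2*s)/2) * (1 + Λ^2*‖y-a‖^2)^(-(((N:ℝ)+2*s)/2)))
        * (((4:ℝ)^s * (Real.Gamma (((N:ℝ) + 2*s)/2) / Real.Gamma (((N:ℝ) - 2*s)/2))) ^ (((N:ℝ)-2*s)/4)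
          * (Λ^(((N:ℝ)-2*s)/2) * (1 + Λ^2*‖y-b‖^2)^(-(((N:ℝ)-2*s)/2))))
      = (((4:ℝ)^s * (Real.Gamma (((N:ℝ) + 2*s)/2) / Real.Gamma (((N:ℝ) - 2*s)/2))) ^ (((N:ℝ)+2*s)/4)
          * ((4:ℝ)^s * (Real.Gamma (((N:ℝ) + 2*s)/2) / Real.Gamma (((N:ℝ) - 2*s)/2))) ^ (((N:ℝ)-2*s)/4))
        * (Λ^(((N:ℝ)+2*s)/2) * Λ^(((N:ℝ)-2*s)/2))
        * ((1 + Λ^2*‖y-a‖^2)^(-(((N:ℝ)+2*s)/2)) * (1 + Λ^2*‖y-b‖^2)^(-(((N:ℝ)-2*s)/2))) := by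
        ring
    _ = _ := by rw [hcc, hΛΛ]

lemma integral_eq (N : ℕ) (hN : 3 ≤ N) {s : ℝ} (hs0 : 0 < s) (hs1 : s < 1) {Λ : ℝ}
    (hΛ : 0 < Λ) (a b : EuclideanSpace ℝ (Fin N)) :
    (∫ y : EuclideanSpace ℝ (Fin N),
        bubble N s a Λ y ^ (2 * (N : ℝ) / ((N : ℝ) - 2 * s) - 1) * bubble N s b Λ y)
      = ((4:ℝ)^s * (Real.Gamma (((N:ℝ) + 2*s)/2) / Real.Gamma (((N:ℝ) - 2*s)/2))) ^ ((N:ℝ)/2) *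
        ∫ z : EuclideanSpace ℝ (Fin N),
          FF N ((N:ℝ) + 2*s) z * FF N ((N:ℝ) - 2*s) (z - Λ • (b - a)) := by
  have hpt : ∀ y : EuclideanSpace ℝ (Fin N),
      bubble N s a Λ y ^ (2 * (N : ℝ) / ((N : ℝ) - 2 * s) - 1) * bubble N s b Λ y
      = ((4:ℝ)^s * (Real.Gamma (((N:ℝ) + 2*s)/2) / Real.Gamma (((N:ℝ) - 2*s)/2))) ^ ((N:ℝ)/2)
          * Λ ^ (N:ℝ) *
        (FF N ((N:ℝ) + 2*s) (Λ • (y - a)) *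
          FF N ((N:ℝ) - 2*s) (Λ • (y - a) - Λ • (b - a))) :=
    bubble_product N hN hs0 hs1 hΛ a b
  rw [integral_congr_ae (ae_of_all _ hpt), integral_const_mul]
  have hG : (∫ y : EuclideanSpace ℝ (Fin N),
        FF N ((N:ℝ) + 2*s) (Λ • (y - a)) * FF N ((N:ℝ) - 2*s) (Λ • (y - a) - Λ • (b - a)))
      = ((Λ ^ N : ℝ))⁻¹ * ∫ z : EuclideanSpace ℝ (Fin N),
          FF N ((N:ℝ) + 2*s) z * FF N ((N:ℝ) - 2*s) (z - Λ • (b - a)) := by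
    have h1 : (∫ y : EuclideanSpace ℝ (Fin N),
          FF N ((N:ℝ) + 2*s) (Λ • (y - a)) * FF N ((N:ℝ) - 2*s) (Λ • (y - a) - Λ • (b - a)))
        = ∫ y : EuclideanSpace ℝ (Fin N),
          FF N ((N:ℝ) + 2*s) (Λ • y) * FF N ((N:ℝ) - 2*s) (Λ • y - Λ • (b - a)) :=
      integral_sub_right_eq_self (fun y : EuclideanSpace ℝ (Fin N) =>
        FF N ((N:ℝ) + 2*s) (Λ • y) * FF N ((N:ℝ) - 2*s) (Λ • y - Λ • (b - a))) a
    rw [h1]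
    have h2 := MeasureTheory.Measure.integral_comp_smul
      (volume : Measure (EuclideanSpace ℝ (Fin N)))
      (fun z : EuclideanSpace ℝ (Fin N) =>
        FF N ((N:ℝ) + 2*s) z * FF N ((N:ℝ) - 2*s) (z - Λ • (b - a))) Λ
    rw [finrank_euclideanSpace_fin] at h2
    rw [h2, smul_eq_mul, abs_of_pos (by positivity)]
  rw [hG, ← mul_assoc]
  congr 1
  rw [mul_comm (((4:ℝ)^s * _) ^ ((N:ℝ)/2)) _, mul_assoc]
  have h3 : Λ ^ (N:ℝ) = (Λ ^ N : ℝ) := Real.rpow_natCast Λ N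
  rw [mul_comm (Λ ^ (N:ℝ)) _, mul_assoc, h3, inv_mul_cancel₀ (by positivity), mul_one, mul_comm]

end Stmt15Aux

/-- For `N ≥ 3` and `s ∈ (0,1)` there exist `B₀ > 0`, `σ > 0`
(depending only on `N`, `s`) such that for each `0 < Λ₁ ≤ Λ₂` there is `C > 0` with
`|∫ U_{a,Λ}^{2*_s−1} U_{b,Λ} − B₀/(Λ^{N−2s}|a−b|^{N−2s})| ≤ C |a−b|^{−(N−2s+σ)}`
for all `Λ ∈ [Λ₁,Λ₂]` and `|a−b| ≥ 1`. -/
theorem stmt_15 (N : ℕ) (hN : 3 ≤ N) (s : ℝ) (hs : s ∈ Set.Ioo (0 : ℝ) 1) :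
    ∃ B₀ > 0, ∃ σ > 0, ∀ Λ₁ Λ₂ : ℝ, 0 < Λ₁ → Λ₁ ≤ Λ₂ → ∃ C > 0,
      ∀ Λ ∈ Set.Icc Λ₁ Λ₂, ∀ a b : EuclideanSpace ℝ (Fin N), 1 ≤ ‖a - b‖ →
        |(∫ y : EuclideanSpace ℝ (Fin N),
            bubble N s a Λ y ^ (2 * (N : ℝ) / ((N : ℝ) - 2 * s) - 1) * bubble N s b Λ y) -
          B₀ / (Λ ^ ((N : ℝ) - 2 * s) * ‖a - b‖ ^ ((N : ℝ) - 2 * s))| ≤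
          C * ‖a - b‖ ^ (-((N : ℝ) - 2 * s + σ)) := by
  obtain ⟨hs0, hs1⟩ := hs
  have hn3 : (3:ℝ) ≤ (N:ℝ) := by exact_mod_cast hN
  have hν : (0:ℝ) < (N:ℝ) - 2*s := by linarith
  have hc0 : (0:ℝ) < (4:ℝ)^s * (Real.Gamma (((N:ℝ) + 2*s)/2) / Real.Gamma (((N:ℝ) - 2*s)/2)) := by
    apply mul_pos (Real.rpow_pos_of_pos (by norm_num) s)
    exact div_pos (Real.Gamma_pos_of_pos (by positivity)) (Real.Gamma_pos_of_pos (by linarith))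
  have hc0p : (0:ℝ) <
      ((4:ℝ)^s * (Real.Gamma (((N:ℝ) + 2*s)/2) / Real.Gamma (((N:ℝ) - 2*s)/2))) ^ ((N:ℝ)/2) :=
    Real.rpow_pos_of_pos hc0 _
  have hA : (0:ℝ) < ∫ z : EuclideanSpace ℝ (Fin N), FF N ((N:ℝ)+2*s) z :=
    FF_integral_pos N (by linarith)
  refine ⟨((4:ℝ)^s * (Real.Gamma (((N:ℝ) + 2*s)/2) / Real.Gamma (((N:ℝ) - 2*s)/2))) ^ ((N:ℝ)/2)
    * ∫ z : EuclideanSpace ℝ (Fin N), FF N ((N:ℝ)+2*s) z, mul_pos hc0p hA, s/2, by positivity,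
    fun Λ₁ Λ₂ hΛ₁ hΛ₁₂ => ?_⟩
  obtain ⟨C₀, hC₀, hcore⟩ := aux_core N hN hs0 hs1 hΛ₁
  have hΛ₁e : (0:ℝ) < Λ₁ ^ (-(((N:ℝ) - 2*s) + s/2)) := Real.rpow_pos_of_pos hΛ₁ _
  refine ⟨((4:ℝ)^s * (Real.Gamma (((N:ℝ) + 2*s)/2) / Real.Gamma (((N:ℝ) - 2*s)/2))) ^ ((N:ℝ)/2)
    * C₀ * Λ₁ ^ (-(((N:ℝ) - 2*s) + s/2)),
    mul_pos (mul_pos hc0p hC₀) hΛ₁e, fun Λ hΛmem a b hab => ?_⟩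
  have hΛ0 : (0:ℝ) < Λ := lt_of_lt_of_le hΛ₁ hΛmem.1
  have hnv : ‖Λ • (b - a)‖ = Λ * ‖a - b‖ := by
    rw [norm_smul, Real.norm_eq_abs, abs_of_pos hΛ0, norm_sub_rev]
  have hab0 : (0:ℝ) < ‖a - b‖ := lt_of_lt_of_le one_pos hab
  have hv1 : Λ₁ ≤ ‖Λ • (b - a)‖ := by
    rw [hnv]
    calc Λ₁ = Λ₁ * 1 := (mul_one _).symm
      _ ≤ Λ * ‖a - b‖ := mul_le_mul hΛmem.1 hab (by norm_num) hΛ0.le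
  have hcore' := hcore (Λ • (b - a)) hv1
  rw [integral_eq N hN hs0 hs1 hΛ0 a b]
  have hBdiv : (((4:ℝ)^s * (Real.Gamma (((N:ℝ) + 2*s)/2) / Real.Gamma (((N:ℝ) - 2*s)/2)))
        ^ ((N:ℝ)/2) * ∫ z : EuclideanSpace ℝ (Fin N), FF N ((N:ℝ)+2*s) z)
        / (Λ ^ ((N:ℝ) - 2*s) * ‖a - b‖ ^ ((N:ℝ) - 2*s))
      = ((4:ℝ)^s * (Real.Gamma (((N:ℝ) + 2*s)/2) / Real.Gamma (((N:ℝ) - 2*s)/2))) ^ ((N:ℝ)/2)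
        * ((∫ z : EuclideanSpace ℝ (Fin N), FF N ((N:ℝ)+2*s) z)
            * ‖Λ • (b - a)‖ ^ (-((N:ℝ) - 2*s))) := by
    rw [hnv, Real.mul_rpow hΛ0.le (norm_nonneg _), Real.rpow_neg hΛ0.le,
      Real.rpow_neg (norm_nonneg _), div_eq_mul_inv, mul_inv]
    ring
  rw [hBdiv, ← mul_sub, abs_mul, abs_of_pos hc0p]
  have hvpow : ‖Λ • (b - a)‖ ^ (-(((N:ℝ) - 2*s) + s/2))
      = Λ ^ (-(((N:ℝ) - 2*s) + s/2)) * ‖a - b‖ ^ (-(((N:ℝ) - 2*s) + s/2)) := by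
    rw [hnv, Real.mul_rpow hΛ0.le (norm_nonneg _)]
  calc ((4:ℝ)^s * (Real.Gamma (((N:ℝ) + 2*s)/2) / Real.Gamma (((N:ℝ) - 2*s)/2))) ^ ((N:ℝ)/2)
        * |(∫ z : EuclideanSpace ℝ (Fin N),
              FF N ((N:ℝ)+2*s) z * FF N ((N:ℝ)-2*s) (z - Λ • (b - a)))
            - (∫ z : EuclideanSpace ℝ (Fin N), FF N ((N:ℝ)+2*s) z)
              * ‖Λ • (b - a)‖ ^ (-((N:ℝ) - 2*s))|
      ≤ ((4:ℝ)^s * (Real.Gamma (((N:ℝ) + 2*s)/2) / Real.Gamma (((N:ℝ) - 2*s)/2))) ^ ((N:ℝ)/2)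
        * (C₀ * ‖Λ • (b - a)‖ ^ (-(((N:ℝ) - 2*s) + s/2))) :=
        mul_le_mul_of_nonneg_left hcore' hc0p.le
    _ = (((4:ℝ)^s * (Real.Gamma (((N:ℝ) + 2*s)/2) / Real.Gamma (((N:ℝ) - 2*s)/2))) ^ ((N:ℝ)/2)
          * C₀ * Λ ^ (-(((N:ℝ) - 2*s) + s/2))) * ‖a - b‖ ^ (-(((N:ℝ) - 2*s) + s/2)) := by
        rw [hvpow]
        ring
    _ ≤ (((4:ℝ)^s * (Real.Gamma (((N:ℝ) + 2*s)/2) / Real.Gamma (((N:ℝ) - 2*s)/2))) ^ ((N:ℝ)/2)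
          * C₀ * Λ₁ ^ (-(((N:ℝ) - 2*s) + s/2))) * ‖a - b‖ ^ (-(((N:ℝ) - 2*s) + s/2)) := by
        apply mul_le_mul_of_nonneg_right _ (Real.rpow_nonneg (norm_nonneg _) _)
        apply mul_le_mul_of_nonneg_left _ (mul_pos hc0p hC₀).le
        exact aux_base_antitone hΛ₁ hΛmem.1 (by positivity)
end
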